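/- arXiv:2604.00274 — 7 statements merged into one kernel-verified Lean document; each statement's English description precedes it below -/
import Mathlib

section
/- Consider the Λ-linear maps d₂ : P_⋆ → P₊ × P₋, v ↦ (t·v, −t·v), and d₁ : P₊ × P₋ → P_⋆, (u,w) ↦ u + w. Then d₂ is injective, the range of d₂ equals the kernel of d₁, and the range of d₁ equals I_⋆. Consequently 0 → P_⋆ → P₊ ⊕ P₋ → P_⋆ → S_⋆ → 0 is a projective resolution of length two of the simple module S_⋆ = P_⋆/I_⋆, which is one-dimensional over k. -/
set_option maxHeartbeats 1600000
set_option synthInstance.maxHeartbeats 400000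

noncomputable section

variable (k : Type) [Field k]

/-- The maximal ideal `m = (t)` of `R = k⟦t⟧`. -/
def mIdeal : Ideal (PowerSeries k) :=
  Ideal.span {PowerSeries.X}

lemma X_mem_mIdeal : (PowerSeries.X : PowerSeries k) ∈ mIdeal k :=
  Ideal.subset_span rfl

/-- The Gelfand order `Λ ⊆ M₃(k⟦t⟧)`: all matrices `A` with
`A₁₂, A₁₃, A₂₃, A₃₂ ∈ m`. -/
def gelfandOrder : Subalgebra k (Matrix (Fin 3) (Fin 3) (PowerSeries k)) where
  carrier := {A | A 0 1 ∈ mIdeal k ∧ A 0 2 ∈ mIdeal k ∧ A 1 2 ∈ mIdeal k ∧ A 2 1 ∈ mIdeal k}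
  zero_mem' := ⟨zero_mem _, zero_mem _, zero_mem _, zero_mem _⟩
  one_mem' := by
    refine ⟨?_, ?_, ?_, ?_⟩ <;>
    · rw [Matrix.one_apply_ne (by decide)]
      exact zero_mem _
  add_mem' := by
    rintro a b ⟨ha1, ha2, ha3, ha4⟩ ⟨hb1, hb2, hb3, hb4⟩
    exact ⟨add_mem ha1 hb1, add_mem ha2 hb2, add_mem ha3 hb3, add_mem ha4 hb4⟩
  mul_mem' := by
    rintro a b ⟨ha1, ha2, ha3, ha4⟩ ⟨hb1, hb2, hb3, hb4⟩
    refine ⟨?_, ?_, ?_, ?_⟩ <;>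
      simp only [Set.mem_setOf_eq, Matrix.mul_apply, Fin.sum_univ_three]
    · exact add_mem (add_mem (Ideal.mul_mem_left _ _ hb1) (Ideal.mul_mem_right _ _ ha1))
        (Ideal.mul_mem_left _ _ hb4)
    · exact add_mem (add_mem (Ideal.mul_mem_left _ _ hb2) (Ideal.mul_mem_left _ _ hb3))
        (Ideal.mul_mem_right _ _ ha2)
    · exact add_mem (add_mem (Ideal.mul_mem_left _ _ hb2) (Ideal.mul_mem_left _ _ hb3))
        (Ideal.mul_mem_right _ _ ha3)
    · exact add_mem (add_mem (Ideal.mul_mem_left _ _ hb1) (Ideal.mul_mem_right _ _ ha4))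
        (Ideal.mul_mem_left _ _ hb4)
  algebraMap_mem' := by
    intro r
    refine ⟨?_, ?_, ?_, ?_⟩ <;>
    · rw [Matrix.algebraMap_matrix_apply, if_neg (by decide)]
      exact zero_mem _

/-- The column space `R³` is a module over the matrix ring `M₃(k⟦t⟧)` via
matrix-vector multiplication; by restriction of scalars it becomes a left module over
every subalgebra of `M₃(k⟦t⟧)`, in particular over the Gelfand order. -/
instance : Module (Matrix (Fin 3) (Fin 3) (PowerSeries k)) (Fin 3 → PowerSeries k) where
  smul A v := A.mulVec v
  one_smul v := Matrix.one_mulVec v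
  mul_smul A B v := (Matrix.mulVec_mulVec v A B).symm
  smul_zero A := Matrix.mulVec_zero A
  smul_add A u v := Matrix.mulVec_add A u v
  add_smul A B v := Matrix.add_mulVec A B v
  zero_smul v := Matrix.zero_mulVec v

instance : IsScalarTower k (Matrix (Fin 3) (Fin 3) (PowerSeries k)) (Fin 3 → PowerSeries k) :=
  ⟨fun c M v => Matrix.smul_mulVec c M v⟩

instance : SMulCommClass (Matrix (Fin 3) (Fin 3) (PowerSeries k)) k (Fin 3 → PowerSeries k) :=
  ⟨fun M c v => Matrix.mulVec_smul M c v⟩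

instance : SMulCommClass k (Matrix (Fin 3) (Fin 3) (PowerSeries k)) (Fin 3 → PowerSeries k) :=
  SMulCommClass.symm _ _ _

instance (S : Subalgebra k (Matrix (Fin 3) (Fin 3) (PowerSeries k))) :
    IsScalarTower k (↥S) (Fin 3 → PowerSeries k) :=
  ⟨fun c A v => by
    show ((c • A : ↥S) : Matrix (Fin 3) (Fin 3) (PowerSeries k)) • v
        = c • ((A : Matrix (Fin 3) (Fin 3) (PowerSeries k)) • v)
    rw [Subalgebra.coe_smul]
    exact smul_assoc c (A : Matrix (Fin 3) (Fin 3) (PowerSeries k)) v⟩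

instance (S : Subalgebra k (Matrix (Fin 3) (Fin 3) (PowerSeries k))) :
    SMulCommClass (↥S) k (Fin 3 → PowerSeries k) :=
  ⟨fun A c v => by
    show (A : Matrix (Fin 3) (Fin 3) (PowerSeries k)) • (c • v)
        = c • ((A : Matrix (Fin 3) (Fin 3) (PowerSeries k)) • v)
    exact smul_comm _ c v⟩

instance (S : Subalgebra k (Matrix (Fin 3) (Fin 3) (PowerSeries k))) :
    SMulCommClass k (↥S) (Fin 3 → PowerSeries k) :=
  SMulCommClass.symm _ _ _

lemma subalg_smul_apply (S : Subalgebra k (Matrix (Fin 3) (Fin 3) (PowerSeries k)))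
    (A : ↥S) (v : Fin 3 → PowerSeries k) (i : Fin 3) :
    (A • v) i = (A : Matrix (Fin 3) (Fin 3) (PowerSeries k)) i 0 * v 0
      + (A : Matrix (Fin 3) (Fin 3) (PowerSeries k)) i 1 * v 1
      + (A : Matrix (Fin 3) (Fin 3) (PowerSeries k)) i 2 * v 2 := by
  show ((A : Matrix (Fin 3) (Fin 3) (PowerSeries k)).mulVec v) i = _
  simp [Matrix.mulVec, dotProduct, Fin.sum_univ_three]

lemma subalg_smul_comm_X (S : Subalgebra k (Matrix (Fin 3) (Fin 3) (PowerSeries k)))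
    (A : ↥S) (x : PowerSeries k) (v : Fin 3 → PowerSeries k) :
    A • (x • v) = x • (A • v) := by
  show (A : Matrix (Fin 3) (Fin 3) (PowerSeries k)) • (x • v)
      = x • ((A : Matrix (Fin 3) (Fin 3) (PowerSeries k)) • v)
  exact Matrix.mulVec_smul _ x v

/-- The column module `P₊ = m ⊕ R ⊕ m` of the Gelfand order. -/
def Pplus : Submodule (↥(gelfandOrder k)) (Fin 3 → PowerSeries k) where
  carrier := {v | v 0 ∈ mIdeal k ∧ v 2 ∈ mIdeal k}
  zero_mem' := ⟨zero_mem _, zero_mem _⟩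
  add_mem' := fun h h' => ⟨add_mem h.1 h'.1, add_mem h.2 h'.2⟩
  smul_mem' := by
    rintro ⟨A, hA1, hA2, hA3, hA4⟩ v ⟨h0, h2⟩
    constructor
    · rw [subalg_smul_apply]
      exact add_mem (add_mem (Ideal.mul_mem_left _ _ h0) (Ideal.mul_mem_right _ _ hA1))
        (Ideal.mul_mem_right _ _ hA2)
    · rw [subalg_smul_apply]
      exact add_mem (add_mem (Ideal.mul_mem_left _ _ h0) (Ideal.mul_mem_right _ _ hA4))
        (Ideal.mul_mem_left _ _ h2)

/-- The column module `P₋ = m ⊕ m ⊕ R` of the Gelfand order. -/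
def Pminus : Submodule (↥(gelfandOrder k)) (Fin 3 → PowerSeries k) where
  carrier := {v | v 0 ∈ mIdeal k ∧ v 1 ∈ mIdeal k}
  zero_mem' := ⟨zero_mem _, zero_mem _⟩
  add_mem' := fun h h' => ⟨add_mem h.1 h'.1, add_mem h.2 h'.2⟩
  smul_mem' := by
    rintro ⟨A, hA1, hA2, hA3, hA4⟩ v ⟨h0, h1⟩
    constructor
    · rw [subalg_smul_apply]
      exact add_mem (add_mem (Ideal.mul_mem_left _ _ h0) (Ideal.mul_mem_left _ _ h1))
        (Ideal.mul_mem_right _ _ hA2)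
    · rw [subalg_smul_apply]
      exact add_mem (add_mem (Ideal.mul_mem_left _ _ h0) (Ideal.mul_mem_left _ _ h1))
        (Ideal.mul_mem_right _ _ hA3)

/-- The module `I_⋆ = m ⊕ R ⊕ R`, a submodule of `P_⋆ = R³`. -/
def Istar : Submodule (↥(gelfandOrder k)) (Fin 3 → PowerSeries k) where
  carrier := {v | v 0 ∈ mIdeal k}
  zero_mem' := show (0 : PowerSeries k) ∈ mIdeal k from zero_mem _
  add_mem' := fun {a b} ha hb => by
    have ha' : a 0 ∈ mIdeal k := ha
    have hb' : b 0 ∈ mIdeal k := hb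
    exact add_mem ha' hb'
  smul_mem' := by
    rintro ⟨A, hA1, hA2, hA3, hA4⟩ v h0
    rw [Set.mem_setOf_eq, subalg_smul_apply]
    exact add_mem (add_mem (Ideal.mul_mem_left _ _ h0) (Ideal.mul_mem_right _ _ hA1))
      (Ideal.mul_mem_right _ _ hA2)

lemma X_smul_mem_mIdeal (x : PowerSeries k) : (PowerSeries.X : PowerSeries k) • x ∈ mIdeal k := by
  rw [smul_eq_mul]
  exact Ideal.mul_mem_right _ _ (X_mem_mIdeal k)

lemma X_smul_mem_Pplus (v : Fin 3 → PowerSeries k) :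
    (PowerSeries.X : PowerSeries k) • v ∈ Pplus k :=
  ⟨by rw [Pi.smul_apply]; exact X_smul_mem_mIdeal k _,
   by rw [Pi.smul_apply]; exact X_smul_mem_mIdeal k _⟩

lemma X_smul_mem_Pminus (v : Fin 3 → PowerSeries k) :
    (PowerSeries.X : PowerSeries k) • v ∈ Pminus k :=
  ⟨by rw [Pi.smul_apply]; exact X_smul_mem_mIdeal k _,
   by rw [Pi.smul_apply]; exact X_smul_mem_mIdeal k _⟩

lemma neg_X_smul_mem_Pminus (v : Fin 3 → PowerSeries k) :
    -((PowerSeries.X : PowerSeries k) • v) ∈ Pminus k :=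
  ⟨by rw [Pi.neg_apply, Pi.smul_apply]; exact neg_mem (X_smul_mem_mIdeal k _),
   by rw [Pi.neg_apply, Pi.smul_apply]; exact neg_mem (X_smul_mem_mIdeal k _)⟩

/-- Multiplication by `t`, as a `Λ`-linear map `P_⋆ = R³ → P₊` with range `t·R³`. -/
def tauPlus : (Fin 3 → PowerSeries k) →ₗ[↥(gelfandOrder k)] ↥(Pplus k) where
  toFun v := ⟨(PowerSeries.X : PowerSeries k) • v, X_smul_mem_Pplus k v⟩
  map_add' u v := Subtype.ext (smul_add _ u v)
  map_smul' A v := Subtype.ext (by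
    show (PowerSeries.X : PowerSeries k) • (A • v) = A • ((PowerSeries.X : PowerSeries k) • v)
    exact (subalg_smul_comm_X k _ A _ v).symm)

/-- Multiplication by `t`, as a `Λ`-linear map `P_⋆ = R³ → P₋` with range `t·R³`. -/
def tauMinus : (Fin 3 → PowerSeries k) →ₗ[↥(gelfandOrder k)] ↥(Pminus k) where
  toFun v := ⟨(PowerSeries.X : PowerSeries k) • v, X_smul_mem_Pminus k v⟩
  map_add' u v := Subtype.ext (smul_add _ u v)
  map_smul' A v := Subtype.ext (by
    show (PowerSeries.X : PowerSeries k) • (A • v) = A • ((PowerSeries.X : PowerSeries k) • v)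
    exact (subalg_smul_comm_X k _ A _ v).symm)

/-- Multiplication by `−t`, as a `Λ`-linear map `P_⋆ = R³ → P₋`. -/
def tauMinusNeg : (Fin 3 → PowerSeries k) →ₗ[↥(gelfandOrder k)] ↥(Pminus k) where
  toFun v := ⟨-((PowerSeries.X : PowerSeries k) • v), neg_X_smul_mem_Pminus k v⟩
  map_add' u v := Subtype.ext (by
    show -((PowerSeries.X : PowerSeries k) • (u + v))
        = -((PowerSeries.X : PowerSeries k) • u) + -((PowerSeries.X : PowerSeries k) • v)
    rw [smul_add, neg_add])
  map_smul' A v := Subtype.ext (by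
    show -((PowerSeries.X : PowerSeries k) • (A • v))
        = A • -((PowerSeries.X : PowerSeries k) • v)
    rw [smul_neg, subalg_smul_comm_X k (gelfandOrder k) A (PowerSeries.X : PowerSeries k) v])

/-- The map `d₂ : P_⋆ → P₊ × P₋`, `v ↦ (t·v, −t·v)`. -/
def dTwo : (Fin 3 → PowerSeries k) →ₗ[↥(gelfandOrder k)] ↥(Pplus k) × ↥(Pminus k) :=
  LinearMap.prod (tauPlus k) (tauMinusNeg k)

/-- The map `d₁ : P₊ × P₋ → P_⋆`, `(u, w) ↦ u + w`. -/
def dOne : (↥(Pplus k) × ↥(Pminus k)) →ₗ[↥(gelfandOrder k)] (Fin 3 → PowerSeries k) :=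
  LinearMap.coprod (Pplus k).subtype (Pminus k).subtype

lemma mem_mIdeal_iff (x : PowerSeries k) :
    x ∈ mIdeal k ↔ PowerSeries.constantCoeff (R := k) x = 0 := by
  rw [mIdeal, Ideal.mem_span_singleton, PowerSeries.X_dvd_iff]

lemma mem_Istar_iff (v : Fin 3 → PowerSeries k) :
    v ∈ Istar k ↔ v 0 ∈ mIdeal k := Iff.rfl

lemma dTwo_injective : Function.Injective (dTwo k) := by
  intro a b h
  have h1 : (PowerSeries.X : PowerSeries k) • a = (PowerSeries.X : PowerSeries k) • b :=
    congrArg Subtype.val (congrArg Prod.fst h)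
  funext i
  have := congrFun h1 i
  simp only [Pi.smul_apply, smul_eq_mul] at this
  exact mul_left_cancel₀ PowerSeries.X_ne_zero this

lemma range_dTwo_eq : LinearMap.range (dTwo k) = LinearMap.ker (dOne k) := by
  ext ⟨u, w⟩
  constructor
  · rintro ⟨v, hv⟩
    rw [LinearMap.mem_ker, ← hv]
    show ((tauPlus k v : Fin 3 → PowerSeries k)) + ((tauMinusNeg k v : Fin 3 → PowerSeries k)) = 0
    show (PowerSeries.X : PowerSeries k) • v + -((PowerSeries.X : PowerSeries k) • v) = 0
    exact add_neg_cancel _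
  · intro h
    have hsum : ((u : Fin 3 → PowerSeries k)) + ((w : Fin 3 → PowerSeries k)) = 0 := h
    have hw : (w : Fin 3 → PowerSeries k) = -(u : Fin 3 → PowerSeries k) := by
      linear_combination (norm := abel) hsum
    have hdvd : ∀ i : Fin 3, ∃ c : PowerSeries k, (u : Fin 3 → PowerSeries k) i
        = PowerSeries.X * c := by
      intro i
      have hmem : (u : Fin 3 → PowerSeries k) i ∈ mIdeal k := by
        fin_cases i
        · exact u.2.1
        · have h1 : (w : Fin 3 → PowerSeries k) 1 ∈ mIdeal k := w.2.2
          rw [hw] at h1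
          simpa using neg_mem h1
        · exact u.2.2
      rcases Ideal.mem_span_singleton.mp hmem with ⟨c, hc⟩
      exact ⟨c, hc⟩
    refine ⟨fun i => (hdvd i).choose, ?_⟩
    have hXv : (PowerSeries.X : PowerSeries k) • (fun i => (hdvd i).choose)
        = (u : Fin 3 → PowerSeries k) := by
      funext i
      simpa using ((hdvd i).choose_spec).symm
    refine Prod.ext (Subtype.ext ?_) (Subtype.ext ?_)
    · exact hXv
    · show -((PowerSeries.X : PowerSeries k) • (fun i => (hdvd i).choose))
          = (w : Fin 3 → PowerSeries k)
      rw [hXv, hw]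

lemma range_dOne_eq : LinearMap.range (dOne k) = Istar k := by
  ext v
  constructor
  · rintro ⟨⟨u, w⟩, rfl⟩
    show ((u : Fin 3 → PowerSeries k) + (w : Fin 3 → PowerSeries k)) 0 ∈ mIdeal k
    exact add_mem u.2.1 w.2.1
  · intro hv
    have hv0 : v 0 ∈ mIdeal k := hv
    refine ⟨(⟨![v 0, v 1, 0], ⟨by simpa using hv0, by simp⟩⟩,
            ⟨![0, 0, v 2], ⟨by simp, by simp⟩⟩), ?_⟩
    show (![v 0, v 1, 0] + ![0, 0, v 2] : Fin 3 → PowerSeries k) = v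
    funext i
    fin_cases i <;> simp

lemma one_vec_not_mem_Istar :
    (![1, 0, 0] : Fin 3 → PowerSeries k) ∉ Istar k := by
  intro h
  have : (1 : PowerSeries k) ∈ mIdeal k := by simpa using (mem_Istar_iff k _).mp h
  rw [mem_mIdeal_iff] at this
  simp at this

/-- The diagonal test matrix `diag(a,0,0)`. -/
def diagA (a : PowerSeries k) : Matrix (Fin 3) (Fin 3) (PowerSeries k) :=
  fun i j => if i = 0 ∧ j = 0 then a else 0

lemma diagA_mem (a : PowerSeries k) : diagA k a ∈ gelfandOrder k := by
  refine ⟨?_, ?_, ?_, ?_⟩ <;>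
  · show (if _ then a else 0) ∈ mIdeal k
    rw [if_neg (by decide)]
    exact zero_mem _

lemma diagA_smul_zero (a : PowerSeries k) (v : Fin 3 → PowerSeries k) :
    ((⟨diagA k a, diagA_mem k a⟩ : ↥(gelfandOrder k)) • v) 0 = a * v 0 := by
  rw [subalg_smul_apply]
  show diagA k a 0 0 * v 0 + diagA k a 0 1 * v 1 + diagA k a 0 2 * v 2 = a * v 0
  have e0 : diagA k a 0 0 = a := if_pos ⟨rfl, rfl⟩
  have e1 : diagA k a 0 1 = 0 := if_neg (by decide)
  have e2 : diagA k a 0 2 = 0 := if_neg (by decide)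
  rw [e0, e1, e2]
  ring

lemma simple_Sstar :
    IsSimpleModule (↥(gelfandOrder k)) ((Fin 3 → PowerSeries k) ⧸ Istar k) := by
  haveI : Nontrivial ((Fin 3 → PowerSeries k) ⧸ Istar k) := by
    refine ⟨Submodule.Quotient.mk ![1, 0, 0], 0, ?_⟩
    rw [Ne, Submodule.Quotient.mk_eq_zero]
    exact one_vec_not_mem_Istar k
  rw [isSimpleModule_iff]
  refine ⟨fun N => ?_⟩
  rcases eq_or_ne N ⊥ with hb | hb
  · exact Or.inl hb
  right
  obtain ⟨x, hxN, hx0⟩ := Submodule.exists_mem_ne_zero_of_ne_bot hb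
  obtain ⟨v, rfl⟩ := Submodule.Quotient.mk_surjective _ x
  have hv : v ∉ Istar k := by
    intro h
    exact hx0 ((Submodule.Quotient.mk_eq_zero _).mpr h)
  have hv0 : PowerSeries.constantCoeff (R := k) (v 0) ≠ 0 := by
    intro h
    exact hv ((mem_mIdeal_iff k _).mpr h)
  rw [eq_top_iff]
  rintro y -
  obtain ⟨u, rfl⟩ := Submodule.Quotient.mk_surjective _ y
  have a : PowerSeries k :=
    PowerSeries.C (R := k) (PowerSeries.constantCoeff (R := k) (u 0) * (PowerSeries.constantCoeff (R := k) (v 0))⁻¹)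
  have key : (Submodule.Quotient.mk u : (Fin 3 → PowerSeries k) ⧸ Istar k)
      = (⟨diagA k (PowerSeries.C (R := k) (PowerSeries.constantCoeff (R := k) (u 0)
          * (PowerSeries.constantCoeff (R := k) (v 0))⁻¹)), diagA_mem k _⟩ : ↥(gelfandOrder k))
        • Submodule.Quotient.mk v := by
    rw [← Submodule.Quotient.mk_smul, Submodule.Quotient.eq, mem_Istar_iff, mem_mIdeal_iff,
      Pi.sub_apply, map_sub, diagA_smul_zero]
    simp only [map_mul, PowerSeries.constantCoeff_C]
    field_simp
    simp
  rw [key]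
  exact Submodule.smul_mem _ _ hxN

lemma finrank_Sstar :
    Module.finrank k ((Fin 3 → PowerSeries k) ⧸ Istar k) = 1 := by
  refine finrank_eq_one (Submodule.Quotient.mk ![1, 0, 0]) ?_ ?_
  · rw [Ne, Submodule.Quotient.mk_eq_zero]
    exact one_vec_not_mem_Istar k
  · intro w
    obtain ⟨u, rfl⟩ := Submodule.Quotient.mk_surjective _ w
    refine ⟨PowerSeries.constantCoeff (R := k) (u 0), ?_⟩
    rw [← Submodule.Quotient.mk_smul, Submodule.Quotient.eq]
    show (PowerSeries.constantCoeff (R := k) (u 0) • (![1, 0, 0] : Fin 3 → PowerSeries k) - u) ∈ Istar k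
    rw [mem_Istar_iff, mem_mIdeal_iff]
    have : PowerSeries.constantCoeff (R := k)
        (algebraMap k (PowerSeries k) (PowerSeries.constantCoeff (R := k) (u 0))) =
        PowerSeries.constantCoeff (R := k) (u 0) := rfl
    simp [Algebra.smul_def, this]

/-- `d₂ : P_⋆ → P₊ × P₋`, `v ↦ (t·v, −t·v)` is injective, its range
is the kernel of `d₁ : P₊ × P₋ → P_⋆`, `(u,w) ↦ u + w`, and the range of `d₁` equals
`I_⋆`.  Consequently `0 → P_⋆ → P₊ ⊕ P₋ → P_⋆ → S_⋆ → 0` is a projective resolution of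
length two of the simple module `S_⋆ = P_⋆/I_⋆`, which is one-dimensional over `k`. -/
theorem projective_resolution_of_Sstar :
    Function.Injective (dTwo k) ∧
    LinearMap.range (dTwo k) = LinearMap.ker (dOne k) ∧
    LinearMap.range (dOne k) = Istar k ∧
    IsSimpleModule (↥(gelfandOrder k)) ((Fin 3 → PowerSeries k) ⧸ Istar k) ∧
    Module.finrank k ((Fin 3 → PowerSeries k) ⧸ Istar k) = 1 := by
  exact ⟨dTwo_injective k, range_dTwo_eq k, range_dOne_eq k, simple_Sstar k, finrank_Sstar k⟩
end
end

section
/- Let P ∈ {P_⋆, P₊, P₋} be one of the indecomposable projective column modules of the Gelfand order Λ, and let L be a Λ-submodule of P such that the quotient P/L is finite-dimensional over k. Then either L = Λ·(tᵖ·e_a) for some standard basis column vector e_a of R³ (a ∈ {1,2,3}) and some p ∈ ℕ with tᵖ·e_a ∈ P, or L = Λ·(tᵖ·e₂) + Λ·(tᵖ·e₃) for some p ∈ ℕ with tᵖ·e₂, tᵖ·e₃ ∈ P. -/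
set_option maxHeartbeats 1600000
set_option synthInstance.maxHeartbeats 400000

noncomputable section

variable (k : Type) [Field k]

instance (p : Submodule (↥(gelfandOrder k)) (Fin 3 → PowerSeries k)) :
    HasQuotient (↥p) (Submodule (↥(gelfandOrder k)) ↥p) :=
  @Submodule.hasQuotient (gelfandOrder k) p _ _ _

instance (p : Submodule (↥(gelfandOrder k)) (Fin 3 → PowerSeries k)) :
    SMulCommClass (↥(gelfandOrder k)) k (↥p) :=
  ⟨fun A c x => Subtype.ext (smul_comm A c (x : Fin 3 → PowerSeries k))⟩

instance (p : Submodule (↥(gelfandOrder k)) (Fin 3 → PowerSeries k)) :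
    SMulCommClass (↥(gelfandOrder k)) k ((Fin 3 → PowerSeries k) ⧸ p) := by
  constructor
  intro A c x
  induction x using Submodule.Quotient.induction_on with
  | H z =>
    rw [← Submodule.Quotient.mk_smul, ← Submodule.Quotient.mk_smul,
      ← Submodule.Quotient.mk_smul, ← Submodule.Quotient.mk_smul, smul_comm]


lemma mem_gelfandOrder_iff (A : Matrix (Fin 3) (Fin 3) (PowerSeries k)) :
    A ∈ gelfandOrder k ↔
      A 0 1 ∈ mIdeal k ∧ A 0 2 ∈ mIdeal k ∧ A 1 2 ∈ mIdeal k ∧ A 2 1 ∈ mIdeal k :=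
  Iff.rfl

lemma C_smul_eq (a : k) (v : Fin 3 → PowerSeries k) :
    a • v = (PowerSeries.C a) • v := by
  funext i
  simp [PowerSeries.smul_eq_C_mul]

lemma diag_mem (r : PowerSeries k) :
    Matrix.diagonal (fun _ => r) ∈ gelfandOrder k := by
  refine ⟨?_, ?_, ?_, ?_⟩ <;>
    · rw [Matrix.diagonal_apply_ne _ (by decide)]; exact zero_mem _

lemma pscalar_smul (r : PowerSeries k) (w : Fin 3 → PowerSeries k) :
    (⟨Matrix.diagonal (fun _ => r), diag_mem k r⟩ : ↥(gelfandOrder k)) • w = r • w := by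
  funext i
  rw [subalg_smul_apply]
  fin_cases i <;> simp [Matrix.diagonal_apply]

lemma pscalar_mem (N : Submodule (↥(gelfandOrder k)) (Fin 3 → PowerSeries k))
    (r : PowerSeries k) {w : Fin 3 → PowerSeries k} (hw : w ∈ N) : r • w ∈ N := by
  rw [← pscalar_smul k r w]
  exact N.smul_mem _ hw

/-- A matrix supported on column `j`. -/
def colMat (c : Fin 3 → PowerSeries k) (j : Fin 3) : Matrix (Fin 3) (Fin 3) (PowerSeries k) :=
  fun i l => if l = j then c i else 0

lemma colMat_smul (c : Fin 3 → PowerSeries k) (j : Fin 3)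
    (h : colMat k c j ∈ gelfandOrder k) (x : PowerSeries k) :
    (⟨colMat k c j, h⟩ : ↥(gelfandOrder k)) • (x • (Pi.single j 1 : Fin 3 → PowerSeries k))
      = fun i => c i * x := by
  funext i
  rw [subalg_smul_apply]
  fin_cases j <;>
    simp [colMat, Pi.single_apply]

/-- The ideal of power series `x` such that `x • e_i ∈ N`. -/
def coordIdeal (N : Submodule (↥(gelfandOrder k)) (Fin 3 → PowerSeries k)) (i : Fin 3) :
    Ideal (PowerSeries k) where
  carrier := {x | x • (Pi.single i 1 : Fin 3 → PowerSeries k) ∈ N}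
  zero_mem' := by simp only [Set.mem_setOf_eq, zero_smul]; exact N.zero_mem
  add_mem' := by
    intro a b ha hb
    simp only [Set.mem_setOf_eq, add_smul]
    exact N.add_mem ha hb
  smul_mem' := by
    intro r x hx
    simp only [Set.mem_setOf_eq, smul_eq_mul, mul_smul]
    exact pscalar_mem k N r hx

lemma mem_coordIdeal (N : Submodule (↥(gelfandOrder k)) (Fin 3 → PowerSeries k)) (i : Fin 3)
    (x : PowerSeries k) :
    x ∈ coordIdeal k N i ↔ x • (Pi.single i 1 : Fin 3 → PowerSeries k) ∈ N :=
  Iff.rfl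

lemma coordIdeal_transfer (N : Submodule (↥(gelfandOrder k)) (Fin 3 → PowerSeries k))
    (i j : Fin 3) (r : PowerSeries k)
    (h : colMat k (Pi.single j r) i ∈ gelfandOrder k) {x : PowerSeries k}
    (hx : x ∈ coordIdeal k N i) : r * x ∈ coordIdeal k N j := by
  rw [mem_coordIdeal] at hx ⊢
  have := N.smul_mem (⟨colMat k (Pi.single j r) i, h⟩ : ↥(gelfandOrder k)) hx
  rw [colMat_smul] at this
  convert this using 1
  funext l
  by_cases hl : l = j <;> simp [Pi.single_apply, hl, mul_comm]

lemma coord_mem (N : Submodule (↥(gelfandOrder k)) (Fin 3 → PowerSeries k))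
    {v : Fin 3 → PowerSeries k} (hv : v ∈ N) (i : Fin 3) : v i ∈ coordIdeal k N i := by
  rw [mem_coordIdeal]
  have h : colMat k (Pi.single i (1 : PowerSeries k)) i ∈ gelfandOrder k := by
    rw [mem_gelfandOrder_iff]
    fin_cases i <;>
      refine ⟨?_, ?_, ?_, ?_⟩ <;>
        simp [colMat, Pi.single_apply]
  have h2 := N.smul_mem (⟨colMat k (Pi.single i (1 : PowerSeries k)) i, h⟩ : ↥(gelfandOrder k)) hv
  convert h2 using 1
  funext l
  rw [subalg_smul_apply]
  fin_cases i <;> fin_cases l <;>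
    simp [colMat, Pi.single_apply]

lemma X_pow_mem_span_iff (a b : ℕ) :
    (PowerSeries.X : PowerSeries k) ^ a ∈ Ideal.span {(PowerSeries.X : PowerSeries k) ^ b}
      ↔ b ≤ a := by
  rw [Ideal.mem_span_singleton, PowerSeries.X_pow_dvd_iff]
  constructor
  · intro h
    by_contra hab
    push_neg at hab
    have := h a hab
    simp [PowerSeries.coeff_X_pow] at this
  · intro hba m hm
    rw [PowerSeries.coeff_X_pow, if_neg (by omega)]

lemma coordIdeal_ne_bot (P : Submodule (↥(gelfandOrder k)) (Fin 3 → PowerSeries k))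
    (hmP : ∀ v : Fin 3 → PowerSeries k, (∀ i, v i ∈ mIdeal k) → v ∈ P)
    (L : Submodule (↥(gelfandOrder k)) (↥P)) [FiniteDimensional k ((↥P) ⧸ L)]
    (i : Fin 3) : coordIdeal k (L.map P.subtype) i ≠ ⊥ := by
  classical
  set n := Module.finrank k ((↥P) ⧸ L) with hn
  have hw : ∀ j : ℕ,
      ((PowerSeries.X : PowerSeries k) ^ (j+1) • (Pi.single i 1 : Fin 3 → PowerSeries k)) ∈ P := by
    intro j
    refine hmP _ fun l => ?_
    rcases eq_or_ne l i with hl | hl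
    · subst hl
      simp only [Pi.smul_apply, Pi.single_eq_same, smul_eq_mul, mul_one]
      exact Ideal.mem_span_singleton.mpr (dvd_pow_self _ (Nat.succ_ne_zero j))
    · simp only [Pi.smul_apply, Pi.single_apply, if_neg hl, smul_eq_mul, mul_zero]
      exact zero_mem _
  set wP : Fin (n+1) → ↥P := fun j =>
    ⟨(PowerSeries.X : PowerSeries k) ^ (j.1+1) • (Pi.single i 1 : Fin 3 → PowerSeries k),
      hw j.1⟩ with hwP
  have hnli : ¬ LinearIndependent k (fun j => Submodule.Quotient.mk (p := L) (wP j)) := by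
    intro h
    have := h.fintype_card_le_finrank
    simp [hn] at this
  obtain ⟨g, hsum, l, hgl⟩ := Fintype.not_linearIndependent_iff.mp hnli
  have hy : (∑ j : Fin (n+1), g j • wP j) ∈ L := by
    have h0 : Submodule.Quotient.mk (p := L) (∑ j : Fin (n+1), g j • wP j) = 0 := by
      rw [← Submodule.mkQ_apply, map_sum]
      simpa only [Submodule.mkQ_apply, Submodule.Quotient.mk_smul] using hsum
    rwa [Submodule.Quotient.mk_eq_zero] at h0
  set f : PowerSeries k :=
    ∑ j : Fin (n+1), PowerSeries.C (g j) * PowerSeries.X ^ (j.1+1) with hf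
  have hfmem : f ∈ coordIdeal k (L.map P.subtype) i := by
    rw [mem_coordIdeal]
    have hcoe : ((∑ j : Fin (n+1), g j • wP j : ↥P) : Fin 3 → PowerSeries k)
        = ∑ j : Fin (n+1), g j • ((PowerSeries.X : PowerSeries k) ^ (j.1+1)
            • (Pi.single i 1 : Fin 3 → PowerSeries k)) := by
      push_cast
      rfl
    have : f • (Pi.single i 1 : Fin 3 → PowerSeries k)
        = ∑ j : Fin (n+1), g j • ((PowerSeries.X : PowerSeries k) ^ (j.1+1)
            • (Pi.single i 1 : Fin 3 → PowerSeries k)) := by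
      rw [hf, Finset.sum_smul]
      refine Finset.sum_congr rfl fun j _ => ?_
      rw [mul_smul, ← C_smul_eq]
    rw [this, ← hcoe]
    exact ⟨_, hy, rfl⟩
  have hfne : f ≠ 0 := by
    intro hf0
    have hc := congrArg (PowerSeries.coeff (l.1+1)) hf0
    rw [hf, map_sum, map_zero] at hc
    simp only [PowerSeries.coeff_C_mul, PowerSeries.coeff_X_pow] at hc
    rw [Finset.sum_eq_single l] at hc
    · simp at hc
      exact hgl hc
    · intro b _ hb
      rw [if_neg, mul_zero]
      intro hbl
      exact hb (Fin.ext (by omega))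
    · intro hl
      exact absurd (Finset.mem_univ l) hl
  intro hbot
  rw [hbot, Submodule.mem_bot] at hfmem
  exact hfne hfmem

lemma span_single_ge (j : Fin 3)
    (x : PowerSeries k) (c : Fin 3 → PowerSeries k) (hm : colMat k c j ∈ gelfandOrder k)
    (v : Fin 3 → PowerSeries k) (hv : ∀ i, v i = c i * x) :
    v ∈ Submodule.span (↥(gelfandOrder k)) {x • (Pi.single j 1 : Fin 3 → PowerSeries k)} := by
  have hve : v = (⟨colMat k c j, hm⟩ : ↥(gelfandOrder k)) • (x • (Pi.single j 1 : Fin 3 → PowerSeries k)) := by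
    rw [colMat_smul]
    funext i
    exact hv i
  rw [hve]
  exact Submodule.smul_mem _ _ (Submodule.mem_span_singleton_self _)

lemma eq_span_singleton_of_map (P : Submodule (↥(gelfandOrder k)) (Fin 3 → PowerSeries k))
    (L : Submodule (↥(gelfandOrder k)) (↥P)) (w : Fin 3 → PowerSeries k) (hw : w ∈ P)
    (h : L.map P.subtype = Submodule.span (↥(gelfandOrder k)) {w}) :
    L = Submodule.span (↥(gelfandOrder k)) {(⟨w, hw⟩ : ↥P)} := by
  apply Submodule.map_injective_of_injective P.injective_subtype
  rw [h, Submodule.map_span, Set.image_singleton]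
  rfl

lemma eq_span_pair_of_map (P : Submodule (↥(gelfandOrder k)) (Fin 3 → PowerSeries k))
    (L : Submodule (↥(gelfandOrder k)) (↥P)) (w₁ w₂ : Fin 3 → PowerSeries k)
    (hw₁ : w₁ ∈ P) (hw₂ : w₂ ∈ P)
    (h : L.map P.subtype = Submodule.span (↥(gelfandOrder k)) {w₁, w₂}) :
    L = Submodule.span (↥(gelfandOrder k)) {(⟨w₁, hw₁⟩ : ↥P), (⟨w₂, hw₂⟩ : ↥P)} := by
  apply Submodule.map_injective_of_injective P.injective_subtype
  rw [h, Submodule.map_span, Set.image_insert_eq, Set.image_singleton]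
  rfl

/-- Let `P ∈ {P_⋆, P₊, P₋}` be an indecomposable projective column
module of `Λ` and `L ⊆ P` a `Λ`-submodule with `P/L` finite-dimensional over `k`.
Then either `L = Λ·(tᵖ·e_a)` for a standard basis vector `e_a` and some `p ∈ ℕ` with
`tᵖ·e_a ∈ P`, or `L = Λ·(tᵖ·e₂) + Λ·(tᵖ·e₃)` for some `p ∈ ℕ` with `tᵖ·e₂, tᵖ·e₃ ∈ P`. -/
theorem submodules_with_finite_dimensional_quotient :
    ∀ P ∈ ({⊤, Pplus k, Pminus k} :
        Set (Submodule (↥(gelfandOrder k)) (Fin 3 → PowerSeries k))),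
    ∀ L : Submodule (↥(gelfandOrder k)) (↥P),
      FiniteDimensional k ((↥P) ⧸ L) →
      (∃ (a : Fin 3) (p : ℕ)
          (h : (PowerSeries.X : PowerSeries k) ^ p • (Pi.single a (1 : PowerSeries k) : Fin 3 → PowerSeries k) ∈ P),
          L = Submodule.span (↥(gelfandOrder k))
            {(⟨(PowerSeries.X : PowerSeries k) ^ p • (Pi.single a (1 : PowerSeries k) : Fin 3 → PowerSeries k), h⟩ : ↥P)}) ∨
      (∃ (p : ℕ)
          (h₂ : (PowerSeries.X : PowerSeries k) ^ p • (Pi.single (1 : Fin 3) (1 : PowerSeries k) : Fin 3 → PowerSeries k) ∈ P)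
          (h₃ : (PowerSeries.X : PowerSeries k) ^ p • (Pi.single (2 : Fin 3) (1 : PowerSeries k) : Fin 3 → PowerSeries k) ∈ P),
          L = Submodule.span (↥(gelfandOrder k))
            {(⟨(PowerSeries.X : PowerSeries k) ^ p • (Pi.single (1 : Fin 3) (1 : PowerSeries k) : Fin 3 → PowerSeries k), h₂⟩ : ↥P),
             (⟨(PowerSeries.X : PowerSeries k) ^ p • (Pi.single (2 : Fin 3) (1 : PowerSeries k) : Fin 3 → PowerSeries k), h₃⟩ : ↥P)}) := by
  classical
  intro P hP L hL
  haveI := hL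
  have hmP : ∀ v : Fin 3 → PowerSeries k, (∀ i, v i ∈ mIdeal k) → v ∈ P := by
    simp only [Set.mem_insert_iff, Set.mem_singleton_iff] at hP
    rcases hP with rfl | rfl | rfl
    · exact fun v _ => Submodule.mem_top
    · exact fun v h => ⟨h 0, h 2⟩
    · exact fun v h => ⟨h 0, h 1⟩
  set N : Submodule (↥(gelfandOrder k)) (Fin 3 → PowerSeries k) := L.map P.subtype with hNdef
  have hNP : N ≤ P := Submodule.map_subtype_le P L
  obtain ⟨p0, hp0⟩ := IsDiscreteValuationRing.ideal_eq_span_pow_irreducible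
    (coordIdeal_ne_bot k P hmP L 0) PowerSeries.X_irreducible
  obtain ⟨p1, hp1⟩ := IsDiscreteValuationRing.ideal_eq_span_pow_irreducible
    (coordIdeal_ne_bot k P hmP L 1) PowerSeries.X_irreducible
  obtain ⟨p2, hp2⟩ := IsDiscreteValuationRing.ideal_eq_span_pow_irreducible
    (coordIdeal_ne_bot k P hmP L 2) PowerSeries.X_irreducible
  have hg0 : (PowerSeries.X : PowerSeries k) ^ p0 ∈ coordIdeal k N 0 := by
    rw [hp0]; exact Ideal.subset_span rfl
  have hg1 : (PowerSeries.X : PowerSeries k) ^ p1 ∈ coordIdeal k N 1 := by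
    rw [hp1]; exact Ideal.subset_span rfl
  have hg2 : (PowerSeries.X : PowerSeries k) ^ p2 ∈ coordIdeal k N 2 := by
    rw [hp2]; exact Ideal.subset_span rfl
  have hm01 : colMat k (Pi.single 1 (1 : PowerSeries k)) 0 ∈ gelfandOrder k := by
    refine ⟨?_, ?_, ?_, ?_⟩ <;> simp [colMat, Pi.single_apply]
  have hm02 : colMat k (Pi.single 2 (1 : PowerSeries k)) 0 ∈ gelfandOrder k := by
    refine ⟨?_, ?_, ?_, ?_⟩ <;> simp [colMat, Pi.single_apply]
  have hm10 : colMat k (Pi.single 0 (PowerSeries.X : PowerSeries k)) 1 ∈ gelfandOrder k := by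
    refine ⟨?_, ?_, ?_, ?_⟩ <;> simp [colMat, Pi.single_apply]
    all_goals exact X_mem_mIdeal k
  have hm20 : colMat k (Pi.single 0 (PowerSeries.X : PowerSeries k)) 2 ∈ gelfandOrder k := by
    refine ⟨?_, ?_, ?_, ?_⟩ <;> simp [colMat, Pi.single_apply]
    all_goals exact X_mem_mIdeal k
  have hm12 : colMat k (Pi.single 2 (PowerSeries.X : PowerSeries k)) 1 ∈ gelfandOrder k := by
    refine ⟨?_, ?_, ?_, ?_⟩ <;> simp [colMat, Pi.single_apply]
    all_goals exact X_mem_mIdeal k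
  have hm21 : colMat k (Pi.single 1 (PowerSeries.X : PowerSeries k)) 2 ∈ gelfandOrder k := by
    refine ⟨?_, ?_, ?_, ?_⟩ <;> simp [colMat, Pi.single_apply]
    all_goals exact X_mem_mIdeal k
  have h10 : p1 ≤ p0 := by
    have h := coordIdeal_transfer k N 0 1 1 hm01 hg0
    rw [one_mul, hp1] at h
    exact (X_pow_mem_span_iff k p0 p1).mp h
  have h20 : p2 ≤ p0 := by
    have h := coordIdeal_transfer k N 0 2 1 hm02 hg0
    rw [one_mul, hp2] at h
    exact (X_pow_mem_span_iff k p0 p2).mp h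
  have h01 : p0 ≤ p1 + 1 := by
    have h := coordIdeal_transfer k N 1 0 PowerSeries.X hm10 hg1
    rw [← pow_succ', hp0] at h
    exact (X_pow_mem_span_iff k (p1 + 1) p0).mp h
  have h02 : p0 ≤ p2 + 1 := by
    have h := coordIdeal_transfer k N 2 0 PowerSeries.X hm20 hg2
    rw [← pow_succ', hp0] at h
    exact (X_pow_mem_span_iff k (p2 + 1) p0).mp h
  have h21 : p2 ≤ p1 + 1 := by
    have h := coordIdeal_transfer k N 1 2 PowerSeries.X hm12 hg1
    rw [← pow_succ', hp2] at h
    exact (X_pow_mem_span_iff k (p1 + 1) p2).mp h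
  have h12 : p1 ≤ p2 + 1 := by
    have h := coordIdeal_transfer k N 2 1 PowerSeries.X hm21 hg2
    rw [← pow_succ', hp1] at h
    exact (X_pow_mem_span_iff k (p2 + 1) p1).mp h
  have recon : ∀ v ∈ N, ∃ r0 r1 r2 : PowerSeries k,
      v 0 = (PowerSeries.X : PowerSeries k) ^ p0 * r0 ∧
      v 1 = (PowerSeries.X : PowerSeries k) ^ p1 * r1 ∧
      v 2 = (PowerSeries.X : PowerSeries k) ^ p2 * r2 := by
    intro v hv
    have c0 := coord_mem k N hv 0
    have c1 := coord_mem k N hv 1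
    have c2 := coord_mem k N hv 2
    rw [hp0, Ideal.mem_span_singleton] at c0
    rw [hp1, Ideal.mem_span_singleton] at c1
    rw [hp2, Ideal.mem_span_singleton] at c2
    obtain ⟨r0, hr0⟩ := c0
    obtain ⟨r1, hr1⟩ := c1
    obtain ⟨r2, hr2⟩ := c2
    exact ⟨r0, r1, r2, hr0, hr1, hr2⟩
  rcases lt_trichotomy p1 p2 with hlt | heqq | hgt
  · -- p1 < p2 : generator X^p1 • e₂ (index 1)
    have e2 : p2 = p1 + 1 := by omega
    have e0 : p0 = p1 + 1 := by omega
    have hwP : (PowerSeries.X : PowerSeries k) ^ p1 •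
        (Pi.single (1 : Fin 3) (1 : PowerSeries k) : Fin 3 → PowerSeries k) ∈ P :=
      hNP ((mem_coordIdeal k N 1 _).mp hg1)
    refine Or.inl ⟨1, p1, hwP, eq_span_singleton_of_map k P L _ hwP ?_⟩
    apply le_antisymm
    · intro v hv
      obtain ⟨r0, r1, r2, hr0, hr1, hr2⟩ := recon v hv
      refine span_single_ge k 1 _ ![PowerSeries.X * r0, r1, PowerSeries.X * r2] ?_ v ?_
      · refine ⟨?_, ?_, ?_, ?_⟩ <;> simp [colMat]
        all_goals exact Ideal.mul_mem_right _ _ (X_mem_mIdeal k)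
      · intro i
        fin_cases i
        · show v 0 = PowerSeries.X * r0 * _
          rw [hr0, e0]; ring
        · show v 1 = r1 * _
          rw [hr1]; ring
        · show v 2 = PowerSeries.X * r2 * _
          rw [hr2, e2]; ring
    · rw [Submodule.span_le, Set.singleton_subset_iff]
      exact hg1
  · -- p1 = p2
    rcases Nat.eq_or_lt_of_le h10 with he | hlt0
    · -- p0 = p1 = p2 : generator X^p0 • e₁ (index 0)
      have e1 : p1 = p0 := he
      have e2 : p2 = p0 := by omega
      have hwP : (PowerSeries.X : PowerSeries k) ^ p0 •
          (Pi.single (0 : Fin 3) (1 : PowerSeries k) : Fin 3 → PowerSeries k) ∈ P :=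
        hNP ((mem_coordIdeal k N 0 _).mp hg0)
      refine Or.inl ⟨0, p0, hwP, eq_span_singleton_of_map k P L _ hwP ?_⟩
      apply le_antisymm
      · intro v hv
        obtain ⟨r0, r1, r2, hr0, hr1, hr2⟩ := recon v hv
        refine span_single_ge k 0 _ ![r0, r1, r2] ?_ v ?_
        · exact ⟨by simp [colMat], by simp [colMat], by simp [colMat], by simp [colMat]⟩
        · intro i
          fin_cases i
          · show v 0 = r0 * _
            rw [hr0]; ring
          · show v 1 = r1 * _
            rw [hr1, e1]; ring
          · show v 2 = r2 * _
            rw [hr2, e2]; ring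
      · rw [Submodule.span_le, Set.singleton_subset_iff]
        exact hg0
    · -- p0 = p1 + 1, p1 = p2 : pair case
      have e0 : p0 = p1 + 1 := by omega
      have e2 : p2 = p1 := by omega
      have hw2 : (PowerSeries.X : PowerSeries k) ^ p1 •
          (Pi.single (1 : Fin 3) (1 : PowerSeries k) : Fin 3 → PowerSeries k) ∈ P :=
        hNP ((mem_coordIdeal k N 1 _).mp hg1)
      have hg2' : (PowerSeries.X : PowerSeries k) ^ p1 ∈ coordIdeal k N 2 := by
        rw [← e2]; exact hg2
      have hw3 : (PowerSeries.X : PowerSeries k) ^ p1 •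
          (Pi.single (2 : Fin 3) (1 : PowerSeries k) : Fin 3 → PowerSeries k) ∈ P :=
        hNP ((mem_coordIdeal k N 2 _).mp hg2')
      refine Or.inr ⟨p1, hw2, hw3, eq_span_pair_of_map k P L _ _ hw2 hw3 ?_⟩
      apply le_antisymm
      · intro v hv
        obtain ⟨r0, r1, r2, hr0, hr1, hr2⟩ := recon v hv
        rw [Submodule.mem_span_pair]
        have hmA : colMat k ![PowerSeries.X * r0, r1, 0] 1 ∈ gelfandOrder k := by
          refine ⟨?_, ?_, ?_, ?_⟩ <;> simp [colMat]
          all_goals exact Ideal.mul_mem_right _ _ (X_mem_mIdeal k)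
        have hmB : colMat k ![0, 0, r2] 2 ∈ gelfandOrder k := by
          refine ⟨?_, ?_, ?_, ?_⟩ <;> simp [colMat]
        refine ⟨⟨colMat k ![PowerSeries.X * r0, r1, 0] 1, hmA⟩,
          ⟨colMat k ![0, 0, r2] 2, hmB⟩, ?_⟩
        rw [colMat_smul, colMat_smul]
        funext i
        fin_cases i
        · show PowerSeries.X * r0 * _ + (0 : PowerSeries k) * _ = v 0
          rw [hr0, e0]; ring
        · show r1 * _ + (0 : PowerSeries k) * _ = v 1
          rw [hr1]; ring
        · show (0 : PowerSeries k) * _ + r2 * _ = v 2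
          rw [hr2, e2]; ring
      · rw [Submodule.span_le]
        rintro w (rfl | rfl)
        · exact hg1
        · exact hg2'
  · -- p2 < p1 : generator X^p2 • e₃ (index 2)
    have e1 : p1 = p2 + 1 := by omega
    have e0 : p0 = p2 + 1 := by omega
    have hwP : (PowerSeries.X : PowerSeries k) ^ p2 •
        (Pi.single (2 : Fin 3) (1 : PowerSeries k) : Fin 3 → PowerSeries k) ∈ P :=
      hNP ((mem_coordIdeal k N 2 _).mp hg2)
    refine Or.inl ⟨2, p2, hwP, eq_span_singleton_of_map k P L _ hwP ?_⟩
    apply le_antisymm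
    · intro v hv
      obtain ⟨r0, r1, r2, hr0, hr1, hr2⟩ := recon v hv
      refine span_single_ge k 2 _ ![PowerSeries.X * r0, PowerSeries.X * r1, r2] ?_ v ?_
      · refine ⟨?_, ?_, ?_, ?_⟩ <;> simp [colMat]
        all_goals exact Ideal.mul_mem_right _ _ (X_mem_mIdeal k)
      · intro i
        fin_cases i
        · show v 0 = PowerSeries.X * r0 * _
          rw [hr0, e0]; ring
        · show v 1 = PowerSeries.X * r1 * _
          rw [hr1, e1]; ring
        · show v 2 = r2 * _
          rw [hr2]; ring
    · rw [Submodule.span_le, Set.singleton_subset_iff]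
      exact hg2
end
end

section
/- For λ ≠ μ in k, the Gelfand-quiver representations M_λ and M_μ are not isomorphic: there is no triple (f₋, f_⋆, f₊) of invertible 2×2 matrices over k satisfying f_⋆B₊ = B₊f₊, f_⋆B₋ = B₋f₋, f₊A₊ = A₊f_⋆ and f₋A₋(λ) = A₋(μ)f_⋆. In particular (M_λ)_{λ∈k} is a family of pairwise non-isomorphic representations. -/
set_option maxHeartbeats 1600000
set_option synthInstance.maxHeartbeats 400000

noncomputable section

variable (k : Type) [Field k]

/-- The matrix `B₊` of the representation `M_λ` of the Gelfand quiver. -/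
def Bp : Matrix (Fin 2) (Fin 2) k := !![1, 0; 0, 0]

/-- The matrix `B₋` of the representation `M_λ` of the Gelfand quiver. -/
def Bm : Matrix (Fin 2) (Fin 2) k := !![0, 0; 1, 0]

/-- The matrix `A₊` of the representation `M_λ` of the Gelfand quiver. -/
def Ap : Matrix (Fin 2) (Fin 2) k := !![0, 0; 1, 1]

/-- The matrix `A₋(λ)` of the representation `M_λ` of the Gelfand quiver. -/
def Am (lam : k) : Matrix (Fin 2) (Fin 2) k := !![0, 0; lam, 1]

/-- For `λ ≠ μ` the representations `M_λ` and `M_μ` of the Gelfand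
quiver are not isomorphic: there is no triple `(f₋, f_⋆, f₊)` of invertible `2×2`
matrices with `f_⋆B₊ = B₊f₊`, `f_⋆B₋ = B₋f₋`, `f₊A₊ = A₊f_⋆`, `f₋A₋(λ) = A₋(μ)f_⋆`. -/
theorem Mlam_pairwise_nonisomorphic (lam mu : k) (hne : lam ≠ mu) :
    ¬∃ (fm fs fp : Matrix (Fin 2) (Fin 2) k),
      IsUnit fm ∧ IsUnit fs ∧ IsUnit fp ∧
      fs * Bp k = Bp k * fp ∧ fs * Bm k = Bm k * fm ∧
      fp * Ap k = Ap k * fs ∧ fm * Am k lam = Am k mu * fs := by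
  rintro ⟨fm, fs, fp, hm, hs, hp, h1, h2, h3, h4⟩
  have hc : fs 1 0 = 0 := by
    have := congrFun (congrFun h1 1) 0
    simp [Bp, Matrix.mul_apply, Fin.sum_univ_two] at this
    exact this
  have hb : fs 0 1 = 0 := by
    have := congrFun (congrFun h2 0) 0
    simp [Bm, Matrix.mul_apply, Fin.sum_univ_two] at this
    exact this
  have hs11 : fp 1 1 = fs 0 0 := by
    have := congrFun (congrFun h3 1) 0
    simp [Ap, Matrix.mul_apply, Fin.sum_univ_two, hc] at this
    exact this
  have hd : fs 1 1 = fs 0 0 := by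
    have := congrFun (congrFun h3 1) 1
    simp [Ap, Matrix.mul_apply, Fin.sum_univ_two, hb, hs11] at this
    exact this.symm
  have hh : fm 1 1 = fs 0 0 := by
    have := congrFun (congrFun h4 1) 1
    simp [Am, Matrix.mul_apply, Fin.sum_univ_two, hb, hd] at this
    exact this
  have hkey : fs 0 0 * lam = mu * fs 0 0 := by
    have := congrFun (congrFun h4 1) 0
    simp [Am, Matrix.mul_apply, Fin.sum_univ_two, hc, hh] at this
    exact this
  have hdet : IsUnit fs.det := (Matrix.isUnit_iff_isUnit_det fs).mp hs
  rw [Matrix.det_fin_two, hb, hc, hd] at hdet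
  have ha : fs 0 0 ≠ 0 := by
    intro h
    rw [h] at hdet
    simp at hdet
  apply hne
  have h' : lam * fs 0 0 = mu * fs 0 0 := by linear_combination hkey
  rcases mul_eq_mul_right_iff.mp h' with h | h
  · exact h
  · exact absurd h ha
end
end

section
/- For λ ∈ k, the representation M_λ is isomorphic to its reflection σ(M_λ) if and only if λ ≠ 0; explicitly, there exists a triple (g₋, g_⋆, g₊) of invertible 2×2 matrices over k satisfying g_⋆B₊ = B₋g₊, g_⋆B₋ = B₊g₋, g₊A₊ = A₋(λ)g_⋆ and g₋A₋(λ) = A₊g_⋆ if and only if λ ≠ 0. -/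
set_option maxHeartbeats 1600000
set_option synthInstance.maxHeartbeats 400000

noncomputable section

variable (k : Type) [Field k]

/-- `M_λ` is isomorphic to its reflection `σ(M_λ)` iff `λ ≠ 0`:
there is a triple `(g₋, g_⋆, g₊)` of invertible `2×2` matrices with `g_⋆B₊ = B₋g₊`,
`g_⋆B₋ = B₊g₋`, `g₊A₊ = A₋(λ)g_⋆`, `g₋A₋(λ) = A₊g_⋆` iff `λ ≠ 0`. -/
theorem Mlam_isomorphic_to_reflection_iff (lam : k) :
    (∃ (gm gs gp : Matrix (Fin 2) (Fin 2) k),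
      IsUnit gm ∧ IsUnit gs ∧ IsUnit gp ∧
      gs * Bp k = Bm k * gp ∧ gs * Bm k = Bp k * gm ∧
      gp * Ap k = Am k lam * gs ∧ gm * Am k lam = Ap k * gs) ↔ lam ≠ 0 := by
  constructor
  · rintro ⟨gm, gs, gp, hgm, hgs, hgp, h1, h2, h3, h4⟩ hlam
    subst hlam
    -- derive entry equations
    have e1 := congrFun (congrFun h1 1) 1
    have e2 := congrFun (congrFun h2 1) 0
    have e3 := congrFun (congrFun h3 1) 1
    simp [Bp, Bm, Ap, Am, Matrix.mul_apply, Fin.sum_univ_two] at e1 e2 e3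
    -- e1 : gp 0 1 = 0, e2 : gs 1 1 = 0, e3 : gp 1 1 = gs 1 1
    have hdet : gp.det = 0 := by
      rw [Matrix.det_fin_two]
      rw [e3, e2, ← e1]
      ring
    have := (Matrix.isUnit_iff_isUnit_det gp).mp hgp
    rw [hdet] at this
    simp at this
  · intro hlam
    refine ⟨1, !![0, 1; lam, 0], !![lam, 0; 0, lam], isUnit_one, ?_, ?_, ?_, ?_, ?_, ?_⟩
    · rw [Matrix.isUnit_iff_isUnit_det, Matrix.det_fin_two_of]
      simpa using (neg_ne_zero.mpr hlam).isUnit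
    · rw [Matrix.isUnit_iff_isUnit_det, Matrix.det_fin_two_of]
      simpa using (mul_ne_zero hlam hlam).isUnit
    · ext i j
      fin_cases i <;> fin_cases j <;>
        simp [Bp, Bm, Matrix.mul_apply, Fin.sum_univ_two]
    · ext i j
      fin_cases i <;> fin_cases j <;>
        simp [Bp, Bm, Matrix.mul_apply, Fin.sum_univ_two]
    · ext i j
      fin_cases i <;> fin_cases j <;>
        simp [Ap, Am, Matrix.mul_apply, Fin.sum_univ_two]
    · ext i j
      fin_cases i <;> fin_cases j <;>
        simp [Ap, Am, Matrix.mul_apply, Fin.sum_univ_two]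
end
end

section
/- For every λ ∈ k, the set E_λ of endomorphism triples of M_λ — triples (f₋, f_⋆, f₊) of 2×2 matrices over k with f_⋆B₊ = B₊f₊, f_⋆B₋ = B₋f₋, f₊A₊ = A₊f_⋆ and f₋A₋(λ) = A₋(λ)f_⋆ — is a 3-dimensional k-subspace of M₂(k)³ closed under componentwise composition, and the componentwise product of any two endomorphism triples whose middle components f_⋆ are not invertible is the zero triple. Hence E_λ is a local k-algebra (isomorphic to k[φ,ψ]/(φ²,φψ,ψ²)) and M_λ is an indecomposable representation. -/
set_option maxHeartbeats 1600000
set_option synthInstance.maxHeartbeats 400000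

noncomputable section

variable (k : Type) [Field k]

/-- The set of endomorphism triples of `M_λ`: triples `(f₋, f_⋆, f₊)` of `2×2` matrices
with `f_⋆B₊ = B₊f₊`, `f_⋆B₋ = B₋f₋`, `f₊A₊ = A₊f_⋆` and `f₋A₋(λ) = A₋(λ)f_⋆`,
as a subalgebra of `M₂(k)³` with componentwise operations. -/
def endTriples (lam : k) : Subalgebra k
    (Matrix (Fin 2) (Fin 2) k × Matrix (Fin 2) (Fin 2) k × Matrix (Fin 2) (Fin 2) k) where
  carrier := {f | f.2.1 * Bp k = Bp k * f.2.2 ∧ f.2.1 * Bm k = Bm k * f.1 ∧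
    f.2.2 * Ap k = Ap k * f.2.1 ∧ f.1 * Am k lam = Am k lam * f.2.1}
  zero_mem' := by
    refine ⟨?_, ?_, ?_, ?_⟩ <;> simp
  one_mem' := by
    refine ⟨?_, ?_, ?_, ?_⟩ <;> simp
  add_mem' := by
    rintro a b ⟨ha1, ha2, ha3, ha4⟩ ⟨hb1, hb2, hb3, hb4⟩
    refine ⟨?_, ?_, ?_, ?_⟩ <;>
      simp only [Prod.fst_add, Prod.snd_add, add_mul, mul_add]
    · rw [ha1, hb1]
    · rw [ha2, hb2]
    · rw [ha3, hb3]
    · rw [ha4, hb4]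
  mul_mem' := by
    rintro a b ⟨ha1, ha2, ha3, ha4⟩ ⟨hb1, hb2, hb3, hb4⟩
    refine ⟨?_, ?_, ?_, ?_⟩ <;> simp only [Prod.fst_mul, Prod.snd_mul]
    · rw [mul_assoc, hb1, ← mul_assoc, ha1, mul_assoc]
    · rw [mul_assoc, hb2, ← mul_assoc, ha2, mul_assoc]
    · rw [mul_assoc, hb3, ← mul_assoc, ha3, mul_assoc]
    · rw [mul_assoc, hb4, ← mul_assoc, ha4, mul_assoc]
  algebraMap_mem' := fun c =>
    ⟨Algebra.commutes c _, Algebra.commutes c _, Algebra.commutes c _, Algebra.commutes c _⟩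

/-- the nilpotent triple φ -/
def Tph : Matrix (Fin 2) (Fin 2) k × Matrix (Fin 2) (Fin 2) k × Matrix (Fin 2) (Fin 2) k :=
  (!![0, 0; 1, 0], 0, 0)

/-- the nilpotent triple ψ -/
def Tps : Matrix (Fin 2) (Fin 2) k × Matrix (Fin 2) (Fin 2) k × Matrix (Fin 2) (Fin 2) k :=
  (0, 0, !![0, 0; 1, 0])

/-- combination a•1 + b•φ + c•ψ -/
def comb (a b c : k) :
    Matrix (Fin 2) (Fin 2) k × Matrix (Fin 2) (Fin 2) k × Matrix (Fin 2) (Fin 2) k :=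
  a • 1 + b • Tph k + c • Tps k

lemma comb_explicit (a b c : k) :
    comb k a b c = (!![a, 0; b, a], !![a, 0; 0, a], !![a, 0; c, a]) := by
  refine Prod.ext ?_ (Prod.ext ?_ ?_) <;>
    · ext i j
      fin_cases i <;> fin_cases j <;>
        simp [comb, Tph, Tps, Matrix.one_apply, Prod.fst_one, Prod.snd_one]

lemma comb_mem (lam a b c : k) : comb k a b c ∈ endTriples k lam := by
  rw [comb_explicit]
  refine ⟨?_, ?_, ?_, ?_⟩ <;>
    · show _ = _
      ext i j
      fin_cases i <;> fin_cases j <;>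
        · simp [Bp, Bm, Ap, Am, Matrix.mul_apply, Fin.sum_univ_two]
          try ring

lemma mem_iff (lam : k)
    (f : Matrix (Fin 2) (Fin 2) k × Matrix (Fin 2) (Fin 2) k × Matrix (Fin 2) (Fin 2) k) :
    f ∈ endTriples k lam ↔ ∃ a b c : k, f = comb k a b c := by
  constructor
  · rintro ⟨h1, h2, h3, h4⟩
    refine ⟨f.2.1 0 0, f.1 1 0, f.2.2 1 0, ?_⟩
    have E : ∀ (M N : Matrix (Fin 2) (Fin 2) k), M = N → ∀ i j, M i j = N i j := by
      intro M N h i j; rw [h]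
    have a1 := E _ _ h1 0 0
    have a2 := E _ _ h1 0 1
    have a3 := E _ _ h1 1 0
    have b1 := E _ _ h2 0 0
    have b3 := E _ _ h2 1 0
    have c3 := E _ _ h3 1 0
    have c4 := E _ _ h3 1 1
    have d2 := E _ _ h4 0 1
    have d4 := E _ _ h4 1 1
    simp only [Bp, Bm, Ap, Am, Matrix.mul_apply, Fin.sum_univ_two] at a1 a2 a3 b1 b3 c3 c4 d2 d4
    simp at a1 a2 a3 b1 b3 c3 c4 d2 d4
    have hs : f.2.1 1 1 = f.2.1 0 0 := by
      have h := c3.symm.trans c4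
      rw [a3, b1] at h
      simpa using h.symm
    rw [comb_explicit]
    refine Prod.ext ?_ (Prod.ext ?_ ?_)
    · ext i j; fin_cases i <;> fin_cases j
      · simpa using b3.symm.trans hs
      · simpa using d2
      · simp
      · simp; rw [d4, b1, hs]; ring
    · ext i j; fin_cases i <;> fin_cases j
      · simp
      · simpa using b1
      · simpa using a3
      · simpa using hs
    · ext i j; fin_cases i <;> fin_cases j
      · simpa using a1.symm
      · simpa using a2.symm
      · simp
      · simp; rw [c3, a3]; ring
  · rintro ⟨a, b, c, rfl⟩
    exact comb_mem k lam a b c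

lemma comb_inj {a b c a' b' c' : k} (h : comb k a b c = comb k a' b' c') :
    a = a' ∧ b = b' ∧ c = c' := by
  rw [comb_explicit, comb_explicit, Prod.ext_iff, Prod.ext_iff] at h
  obtain ⟨h1, h2, h3⟩ := h
  refine ⟨?_, ?_, ?_⟩
  · simpa using congrFun (congrFun h2 0) 0
  · simpa using congrFun (congrFun h1 1) 0
  · simpa using congrFun (congrFun h3 1) 0

lemma comb_mul (a b c a' b' c' : k) :
    comb k a b c * comb k a' b' c' = comb k (a * a') (a * b' + a' * b) (a * c' + a' * c) := by
  rw [comb_explicit, comb_explicit, comb_explicit, Prod.mk_mul_mk, Prod.mk_mul_mk]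
  refine Prod.ext ?_ (Prod.ext ?_ ?_) <;>
    · ext i j
      fin_cases i <;> fin_cases j <;>
        · simp [Matrix.mul_apply, Fin.sum_univ_two]
          try ring

lemma comb_add (a b c a' b' c' : k) :
    comb k a b c + comb k a' b' c' = comb k (a + a') (b + b') (c + c') := by
  simp only [comb, add_smul]
  abel

lemma comb_smul (r a b c : k) : r • comb k a b c = comb k (r * a) (r * b) (r * c) := by
  simp only [comb, smul_add, mul_smul]

lemma comb_sub (a b c a' b' c' : k) :
    comb k a b c - comb k a' b' c' = comb k (a - a') (b - b') (c - c') := by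
  simp only [comb, sub_smul]
  abel

lemma comb_zero : comb k 0 0 0 = 0 := by simp [comb]

lemma comb_one : comb k 1 0 0 = 1 := by simp [comb]

lemma isUnit_comb {lam a b c : k} (ha : a ≠ 0) (f : ↥(endTriples k lam))
    (hf : (f : Matrix (Fin 2) (Fin 2) k × Matrix (Fin 2) (Fin 2) k × Matrix (Fin 2) (Fin 2) k)
      = comb k a b c) : IsUnit f := by
  have e1 : a * a⁻¹ = 1 := mul_inv_cancel₀ ha
  have e2 : a * (-(b / (a * a))) + a⁻¹ * b = 0 := by field_simp; try ring
  have e3 : a * (-(c / (a * a))) + a⁻¹ * c = 0 := by field_simp; try ring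
  have e1' : a⁻¹ * a = 1 := inv_mul_cancel₀ ha
  have e2' : a⁻¹ * b + a * (-(b / (a * a))) = 0 := by field_simp; try ring
  have e3' : a⁻¹ * c + a * (-(c / (a * a))) = 0 := by field_simp; try ring
  refine ⟨⟨f, ⟨comb k a⁻¹ (-(b / (a * a))) (-(c / (a * a))), comb_mem k lam _ _ _⟩, ?_, ?_⟩, rfl⟩
  · apply Subtype.ext
    rw [MulMemClass.coe_mul, OneMemClass.coe_one, hf]
    show _ * comb k a⁻¹ (-(b / (a * a))) (-(c / (a * a))) = _
    rw [comb_mul, e1, e2, e3, comb_one]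
  · apply Subtype.ext
    rw [MulMemClass.coe_mul, OneMemClass.coe_one, hf]
    show comb k a⁻¹ (-(b / (a * a))) (-(c / (a * a))) * _ = _
    rw [comb_mul, e1', e2', e3', comb_one]

lemma middle_unit {a : k} (ha : a ≠ 0) : IsUnit (!![a, 0; 0, a] : Matrix (Fin 2) (Fin 2) k) := by
  have h : (!![a, 0; 0, a] : Matrix (Fin 2) (Fin 2) k) * !![a⁻¹, 0; 0, a⁻¹] = 1 := by
    ext i j
    fin_cases i <;> fin_cases j <;>
      simp [Matrix.mul_apply, Fin.sum_univ_two, Matrix.one_apply, mul_inv_cancel₀ ha]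
  have h' : (!![a⁻¹, 0; 0, a⁻¹] : Matrix (Fin 2) (Fin 2) k) * !![a, 0; 0, a] = 1 := by
    ext i j
    fin_cases i <;> fin_cases j <;>
      simp [Matrix.mul_apply, Fin.sum_univ_two, Matrix.one_apply, inv_mul_cancel₀ ha]
  exact ⟨⟨_, _, h, h'⟩, rfl⟩

lemma coeff_zero_of_not_unit {lam : k} (f : ↥(endTriples k lam)) {a b c : k}
    (hf : (f : Matrix (Fin 2) (Fin 2) k × Matrix (Fin 2) (Fin 2) k × Matrix (Fin 2) (Fin 2) k)
      = comb k a b c)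
    (h : ¬IsUnit ((f : Matrix (Fin 2) (Fin 2) k × Matrix (Fin 2) (Fin 2) k ×
      Matrix (Fin 2) (Fin 2) k)).2.1) : a = 0 := by
  by_contra ha
  apply h
  rw [hf, comb_explicit]
  exact middle_unit k ha

open MvPolynomial in
lemma rep_lemma (p : MvPolynomial (Fin 2) k) :
    ∃ a b c : k, Ideal.Quotient.mk (Ideal.span
      {(X 0 : MvPolynomial (Fin 2) k) ^ 2, X 0 * X 1, (X 1 : MvPolynomial (Fin 2) k) ^ 2}) p =
    Ideal.Quotient.mk _ (C a + C b * X 0 + C c * X 1) := by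
  set I : Ideal (MvPolynomial (Fin 2) k) := Ideal.span
      {(X 0 : MvPolynomial (Fin 2) k) ^ 2, X 0 * X 1, (X 1 : MvPolynomial (Fin 2) k) ^ 2} with hI
  have hx00 : (X 0 : MvPolynomial (Fin 2) k) * X 0 ∈ I := by
    rw [← sq, hI]; exact Ideal.subset_span (Set.mem_insert _ _)
  have hx01 : (X 0 : MvPolynomial (Fin 2) k) * X 1 ∈ I := by
    rw [hI]; exact Ideal.subset_span (Set.mem_insert_of_mem _ (Set.mem_insert _ _))
  have hx11 : (X 1 : MvPolynomial (Fin 2) k) * X 1 ∈ I := by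
    rw [← sq, hI]
    exact Ideal.subset_span (Set.mem_insert_of_mem _ (Set.mem_insert_of_mem _ rfl))
  have hx : ∀ i j : Fin 2, (X i : MvPolynomial (Fin 2) k) * X j ∈ I := by
    intro i j
    fin_cases i <;> fin_cases j
    · exact hx00
    · exact hx01
    · have := hx01; rwa [mul_comm] at this
    · exact hx11
  induction p using MvPolynomial.induction_on with
  | C a => exact ⟨a, 0, 0, by simp⟩
  | add p q hp hq =>
    obtain ⟨a, b, c, hp⟩ := hp
    obtain ⟨a', b', c', hq⟩ := hq
    refine ⟨a + a', b + b', c + c', ?_⟩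
    rw [map_add, hp, hq, ← map_add]
    congr 1
    rw [map_add (C : k →+* MvPolynomial (Fin 2) k), map_add (C : k →+* MvPolynomial (Fin 2) k),
      map_add (C : k →+* MvPolynomial (Fin 2) k)]
    ring
  | mul_X p n hp =>
    obtain ⟨a, b, c, hp⟩ := hp
    have key : ∀ m : Fin 2, (Ideal.Quotient.mk I) (p * X m) =
        (Ideal.Quotient.mk I) ((C a + C b * X 0 + C c * X 1) * X m) := fun m => by
      rw [map_mul, hp, ← map_mul]
    fin_cases n
    · refine ⟨0, a, 0, ?_⟩
      simp only [Fin.zero_eta]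
      rw [key 0, Ideal.Quotient.eq]
      have h : (C a + C b * X 0 + C c * X 1) * (X 0 : MvPolynomial (Fin 2) k) -
          (C 0 + C a * X 0 + C (0:k) * X 1) =
          C b * (X 0 * X 0) + C c * (X 1 * X 0) := by
        rw [map_zero]; ring
      rw [h]
      exact add_mem (I.mul_mem_left _ (hx 0 0)) (I.mul_mem_left _ (hx 1 0))
    · refine ⟨0, 0, a, ?_⟩
      simp only [Fin.mk_one]
      rw [key 1, Ideal.Quotient.eq]
      have h : (C a + C b * X 0 + C c * X 1) * (X 1 : MvPolynomial (Fin 2) k) -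
          (C 0 + C (0:k) * X 0 + C a * X 1) =
          C b * (X 0 * X 1) + C c * (X 1 * X 1) := by
        rw [map_zero]; ring
      rw [h]
      exact add_mem (I.mul_mem_left _ (hx 0 1)) (I.mul_mem_left _ (hx 1 1))

lemma tph_eq : Tph k = comb k 0 1 0 := by
  rw [comb_explicit]
  refine Prod.ext ?_ (Prod.ext ?_ ?_) <;>
    · ext i j; fin_cases i <;> fin_cases j <;> simp [Tph]

lemma tps_eq : Tps k = comb k 0 0 1 := by
  rw [comb_explicit]
  refine Prod.ext ?_ (Prod.ext ?_ ?_) <;>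
    · ext i j; fin_cases i <;> fin_cases j <;> simp [Tps]


open MvPolynomial

/-- For every `λ ∈ k`, the set `E_λ` of endomorphism triples of `M_λ`
is a 3-dimensional `k`-subspace of `M₂(k)³`, closed under componentwise composition,
and the product of two triples whose middle components are not invertible is zero.
Hence `E_λ` is a local `k`-algebra, isomorphic to `k[φ,ψ]/(φ²,φψ,ψ²)`, and `M_λ` is
indecomposable. -/
theorem endTriples_local_algebra (lam : k) :
    Module.finrank k ↥(endTriples k lam) = 3 ∧
    (∀ f g : Matrix (Fin 2) (Fin 2) k × Matrix (Fin 2) (Fin 2) k × Matrix (Fin 2) (Fin 2) k,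
      f ∈ endTriples k lam → g ∈ endTriples k lam → f * g ∈ endTriples k lam) ∧
    (∀ f g : ↥(endTriples k lam),
      ¬IsUnit ((f : Matrix (Fin 2) (Fin 2) k × Matrix (Fin 2) (Fin 2) k ×
          Matrix (Fin 2) (Fin 2) k)).2.1 →
      ¬IsUnit ((g : Matrix (Fin 2) (Fin 2) k × Matrix (Fin 2) (Fin 2) k ×
          Matrix (Fin 2) (Fin 2) k)).2.1 →
      f * g = 0) ∧
    IsLocalRing ↥(endTriples k lam) ∧
    Nonempty (↥(endTriples k lam) ≃ₐ[k]
      (MvPolynomial (Fin 2) k ⧸ Ideal.span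
        {(MvPolynomial.X 0 : MvPolynomial (Fin 2) k) ^ 2,
         MvPolynomial.X 0 * MvPolynomial.X 1,
         (MvPolynomial.X 1 : MvPolynomial (Fin 2) k) ^ 2})) ∧
    (∀ f : ↥(endTriples k lam), f * f = f → f = 0 ∨ f = 1) := by
  have coeffs : ∀ f : ↥(endTriples k lam), ∃ a b c : k,
      (f : Matrix (Fin 2) (Fin 2) k × Matrix (Fin 2) (Fin 2) k × Matrix (Fin 2) (Fin 2) k)
        = comb k a b c := fun f => (mem_iff k lam _).1 f.2
  have hcomm : ∀ f g : ↥(endTriples k lam), f * g = g * f := by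
    intro f g
    obtain ⟨a, b, c, hf⟩ := coeffs f
    obtain ⟨a', b', c', hg⟩ := coeffs g
    apply Subtype.ext
    rw [MulMemClass.coe_mul, MulMemClass.coe_mul, hf, hg, comb_mul, comb_mul]
    ring_nf
  letI : CommRing ↥(endTriples k lam) :=
    { (inferInstance : Ring ↥(endTriples k lam)) with mul_comm := hcomm }
  refine ⟨?_, ?_, ?_, ?_, ?_, ?_⟩
  · -- finrank = 3
    let L : (k × k × k) →ₗ[k] ↥(endTriples k lam) :=
      { toFun := fun x => ⟨comb k x.1 x.2.1 x.2.2, comb_mem k lam _ _ _⟩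
        map_add' := fun x y => Subtype.ext (by
          push_cast
          rw [comb_add]
          rfl)
        map_smul' := fun r x => Subtype.ext (by
          push_cast
          rw [comb_smul]
          rfl) }
    have hbij : Function.Bijective L := by
      constructor
      · intro x y h
        have h' := congrArg Subtype.val h
        obtain ⟨h1, h2, h3⟩ := comb_inj k h'
        exact Prod.ext h1 (Prod.ext h2 h3)
      · intro f
        obtain ⟨a, b, c, hf⟩ := coeffs f
        exact ⟨(a, b, c), Subtype.ext hf.symm⟩
    rw [← (LinearEquiv.ofBijective L hbij).finrank_eq]
    simp [Module.finrank_prod, Module.finrank_self]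
  · -- closure under multiplication
    exact fun f g hf hg => (endTriples k lam).mul_mem hf hg
  · -- product of non-units is zero
    intro f g hf hg
    obtain ⟨a, b, c, hfe⟩ := coeffs f
    obtain ⟨a', b', c', hge⟩ := coeffs g
    have ha : a = 0 := coeff_zero_of_not_unit k f hfe hf
    have ha' : a' = 0 := coeff_zero_of_not_unit k g hge hg
    apply Subtype.ext
    rw [MulMemClass.coe_mul, hfe, hge, comb_mul, ha, ha']
    simpa using comb_zero k
  · -- local ring
    have hnt : (0 : ↥(endTriples k lam)) ≠ 1 := by
      intro h
      have h2 := congrArg (fun x => ((x : ↥(endTriples k lam)) :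
        Matrix (Fin 2) (Fin 2) k × Matrix (Fin 2) (Fin 2) k ×
          Matrix (Fin 2) (Fin 2) k).2.1 0 0) h
      simp [Matrix.one_apply] at h2
    haveI : Nontrivial ↥(endTriples k lam) := ⟨0, 1, hnt⟩
    apply IsLocalRing.of_isUnit_or_isUnit_one_sub_self
    intro f
    obtain ⟨a, b, c, hf⟩ := coeffs f
    by_cases ha : a = 0
    · right
      have h1 : ((1 - f : ↥(endTriples k lam)) :
          Matrix (Fin 2) (Fin 2) k × Matrix (Fin 2) (Fin 2) k × Matrix (Fin 2) (Fin 2) k)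
          = comb k (1 - a) (-b) (-c) := by
        push_cast
        rw [hf, ← comb_one, comb_sub]
        norm_num
      exact isUnit_comb k (by rw [ha]; norm_num) _ h1
    · left
      exact isUnit_comb k ha f hf
  · -- algebra equivalence
    set I : Ideal (MvPolynomial (Fin 2) k) := Ideal.span
      {(X 0 : MvPolynomial (Fin 2) k) ^ 2, X 0 * X 1, (X 1 : MvPolynomial (Fin 2) k) ^ 2}
      with hIdef
    have hPhiMem : Tph k ∈ endTriples k lam := (mem_iff k lam _).2 ⟨0, 1, 0, tph_eq k⟩
    have hPsiMem : Tps k ∈ endTriples k lam := (mem_iff k lam _).2 ⟨0, 0, 1, tps_eq k⟩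
    set Phi : ↥(endTriples k lam) := ⟨Tph k, hPhiMem⟩ with hPhi
    set Psi : ↥(endTriples k lam) := ⟨Tps k, hPsiMem⟩ with hPsi
    set A : MvPolynomial (Fin 2) k →ₐ[k] ↥(endTriples k lam) :=
      MvPolynomial.aeval ![Phi, Psi] with hA
    have hPhi2 : Phi * Phi = 0 := by
      apply Subtype.ext
      push_cast
      show Tph k * Tph k = 0
      rw [tph_eq, comb_mul]
      simpa using comb_zero k
    have hPhiPsi : Phi * Psi = 0 := by
      apply Subtype.ext
      push_cast
      show Tph k * Tps k = 0
      rw [tph_eq, tps_eq, comb_mul]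
      simpa using comb_zero k
    have hPsi2 : Psi * Psi = 0 := by
      apply Subtype.ext
      push_cast
      show Tps k * Tps k = 0
      rw [tps_eq, comb_mul]
      simpa using comb_zero k
    have hgen : ∀ p ∈ I, A p = 0 := by
      intro p hp
      rw [hIdef] at hp
      have hsub : ({(X 0 : MvPolynomial (Fin 2) k) ^ 2, X 0 * X 1,
          (X 1 : MvPolynomial (Fin 2) k) ^ 2} : Set (MvPolynomial (Fin 2) k)) ⊆
          ↑(RingHom.ker A.toRingHom) := by
        rintro q hq
        simp only [Set.mem_insert_iff, Set.mem_singleton_iff] at hq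
        rcases hq with rfl | rfl | rfl <;>
          · rw [SetLike.mem_coe, RingHom.mem_ker]
            rw [hA]
            simp only [AlgHom.toRingHom_eq_coe, RingHom.coe_coe, map_pow, map_mul,
              MvPolynomial.aeval_X, Matrix.cons_val_zero, Matrix.cons_val_one, Matrix.head_cons]
            first
              | rw [sq, hPhi2]
              | rw [hPhiPsi]
              | rw [sq, hPsi2]
      have := Ideal.span_le.2 hsub hp
      rwa [RingHom.mem_ker] at this
    set B : (MvPolynomial (Fin 2) k ⧸ I) →ₐ[k] ↥(endTriples k lam) :=
      Ideal.Quotient.liftₐ I A hgen with hB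
    have hBmk : ∀ p, B (Ideal.Quotient.mk I p) = A p := by
      intro p
      rw [hB, Ideal.Quotient.liftₐ_apply]
      rfl
    have hAval : ∀ a b c : k, A (C a + C b * X 0 + C c * X 1) =
        ⟨comb k a b c, comb_mem k lam a b c⟩ := by
      intro a b c
      apply Subtype.ext
      rw [hA]
      simp only [map_add, map_mul, MvPolynomial.aeval_C, MvPolynomial.aeval_X,
        Matrix.cons_val_zero, Matrix.cons_val_one, Matrix.head_cons]
      push_cast
      rw [Algebra.algebraMap_eq_smul_one, Algebra.algebraMap_eq_smul_one,
        Algebra.algebraMap_eq_smul_one, smul_mul_assoc, smul_mul_assoc, one_mul, one_mul]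
      rfl
    have hsurj : Function.Surjective B := by
      intro f
      obtain ⟨a, b, c, hf⟩ := coeffs f
      exact ⟨Ideal.Quotient.mk I (C a + C b * X 0 + C c * X 1),
        by rw [hBmk, hAval]; exact Subtype.ext hf.symm⟩
    have hinj : Function.Injective B := by
      rw [injective_iff_map_eq_zero]
      intro q hq
      obtain ⟨p, rfl⟩ := Ideal.Quotient.mk_surjective q
      obtain ⟨a, b, c, hp⟩ := rep_lemma k p
      rw [← hIdef] at hp
      rw [hp, hBmk, hAval] at hq
      have hq' : comb k a b c = comb k 0 0 0 := by
        rw [comb_zero]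
        exact congrArg Subtype.val hq
      obtain ⟨h1, h2, h3⟩ := comb_inj k hq'
      rw [hp, h1, h2, h3]
      simp
    exact ⟨(AlgEquiv.ofBijective B ⟨hinj, hsurj⟩).symm⟩
  · -- idempotents are trivial
    intro f hf2
    obtain ⟨a, b, c, hf⟩ := coeffs f
    have hv := congrArg Subtype.val hf2
    rw [MulMemClass.coe_mul, hf, comb_mul] at hv
    obtain ⟨h1, h2, h3⟩ := comb_inj k hv
    rcases eq_or_ne a 0 with ha | ha
    · left
      subst ha
      simp only [zero_mul, add_zero, zero_add] at h2 h3
      apply Subtype.ext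
      rw [hf, ← h2, ← h3, comb_zero]
      rfl
    · right
      have ha1 : a = 1 := mul_left_cancel₀ ha (h1.trans (mul_one a).symm)
      subst ha1
      have hb : b = 0 := by linear_combination h2
      have hc : c = 0 := by linear_combination h3
      apply Subtype.ext
      rw [hf, hb, hc, comb_one]
      rfl
end
end

section
/- Let k be a field, m ≥ 1 an integer, λ ∈ k \ {0,1}, and J_λ ∈ M_m(k) the Jordan block of size m with eigenvalue λ. Consider V = k^m × k^m with the four subspaces U₁ = {(x,0) : x ∈ k^m}, U₂ = {(0,y) : y ∈ k^m}, U₃ = {(x,x) : x ∈ k^m} and U₄ = {(x, J_λ x) : x ∈ k^m}. Then every idempotent k-linear endomorphism S of V with S(Uᵢ) ⊆ Uᵢ for i = 1,2,3,4 equals 0 or the identity; that is, the corresponding representation R_λ^{(m)} of the four subspace quiver, with dimension vector (2m, m, m, m, m), is indecomposable. -/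
set_option maxHeartbeats 1600000
set_option synthInstance.maxHeartbeats 400000

noncomputable section

/-- The `m × m` Jordan block with eigenvalue `λ`. -/
def jordanBlock (k : Type*) [Field k] (m : ℕ) (lam : k) : Matrix (Fin m) (Fin m) k :=
  Matrix.of fun i j => if i = j then lam else if (i : ℕ) + 1 = (j : ℕ) then 1 else 0

/-- The shift (nilpotent) part of the Jordan block, as a linear map. -/
def fsShift (k : Type*) [Field k] (m : ℕ) : (Fin m → k) →ₗ[k] (Fin m → k) where
  toFun x := fun i => if h : (i : ℕ) + 1 < m then x ⟨(i : ℕ) + 1, h⟩ else 0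
  map_add' x y := by funext i; by_cases h : (i : ℕ) + 1 < m <;> simp [h]
  map_smul' c x := by funext i; by_cases h : (i : ℕ) + 1 < m <;> simp [h]

lemma fsShift_apply {k : Type*} [Field k] {m : ℕ} (x : Fin m → k) (i : Fin m) :
    fsShift k m x i = if h : (i : ℕ) + 1 < m then x ⟨(i : ℕ) + 1, h⟩ else 0 := rfl

lemma jordan_mulVec {k : Type*} [Field k] {m : ℕ} (lam : k) (x : Fin m → k) :
    (jordanBlock k m lam).mulVec x = lam • x + fsShift k m x := by
  funext i
  simp only [Matrix.mulVec, dotProduct, jordanBlock, Matrix.of_apply,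
    Pi.add_apply, Pi.smul_apply, smul_eq_mul, fsShift_apply]
  have : ∀ j : Fin m, (if i = j then lam else if (i : ℕ) + 1 = (j : ℕ) then 1 else 0) * x j
      = (if i = j then lam * x j else 0) +
        (if (i : ℕ) + 1 = (j : ℕ) then x j else 0) := by
    intro j
    by_cases h : i = j
    · subst h
      simp [show ¬ ((i : ℕ) + 1 = (i : ℕ)) from by omega]
    · by_cases h2 : (i : ℕ) + 1 = (j : ℕ) <;> simp [h, h2]
  rw [Finset.sum_congr rfl fun j _ => this j, Finset.sum_add_distrib]
  congr 1
  · simp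
  · by_cases h : (i : ℕ) + 1 < m
    · rw [dif_pos h, Finset.sum_eq_single (⟨(i : ℕ) + 1, h⟩ : Fin m)]
      · simp
      · intro j _ hj
        have : ¬ ((i : ℕ) + 1 = (j : ℕ)) := fun hc => hj (by ext; simp [hc.symm])
        simp [this]
      · simp
    · rw [dif_neg h]
      apply Finset.sum_eq_zero
      intro j _
      have : ¬ ((i : ℕ) + 1 = (j : ℕ)) := by have := j.isLt; omega
      simp [this]

lemma fsShift_pow {k : Type*} [Field k] {m : ℕ} (n : ℕ) (x : Fin m → k) (i : Fin m) :
    ((fsShift k m ^ n) x) i = if h : (i : ℕ) + n < m then x ⟨(i : ℕ) + n, h⟩ else 0 := by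
  induction n generalizing x i with
  | zero => simp [Fin.eta]
  | succ n ih =>
    rw [pow_succ']
    show fsShift k m ((fsShift k m ^ n) x) i = _
    rw [fsShift_apply]
    by_cases h : (i : ℕ) + 1 < m
    · rw [dif_pos h, ih]
      by_cases h2 : (i : ℕ) + 1 + n < m
      · rw [dif_pos h2, dif_pos (by omega)]
        congr 1
        ext
        simp; omega
      · rw [dif_neg h2, dif_neg (by omega)]
    · rw [dif_neg h, dif_neg (by omega)]

lemma fsShift_pow_m {k : Type*} [Field k] {m : ℕ} (x : Fin m → k) :
    (fsShift k m ^ m) x = 0 := by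
  funext i
  rw [fsShift_pow, dif_neg (by omega)]
  rfl

lemma fsShift_ker {k : Type*} [Field k] {m : ℕ} (hm : 1 ≤ m) (x : Fin m → k)
    (hx : fsShift k m x = 0) :
    x = x ⟨0, hm⟩ • (Pi.single (⟨0, hm⟩ : Fin m) 1 : Fin m → k) := by
  funext j
  rcases Nat.eq_zero_or_pos (j : ℕ) with h | h
  · have : j = ⟨0, hm⟩ := by ext; simp [h]
    subst this
    simp
  · have hj : x j = 0 := by
      have hlt : ((j : ℕ) - 1) + 1 < m := by have := j.isLt; omega
      have := congrFun hx ⟨(j : ℕ) - 1, by omega⟩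
      rw [fsShift_apply, dif_pos hlt] at this
      have hje : (⟨(j : ℕ) - 1 + 1, hlt⟩ : Fin m) = j := by ext; simp; omega
      rw [hje] at this
      exact this
    have : j ≠ ⟨0, hm⟩ := fun hc => by rw [hc] at h; simp at h
    simp [hj, Pi.single_apply, this]

/-- Let `m ≥ 1`, `λ ∈ k \ {0,1}`, and consider
`V = k^m × k^m` with the four subspaces `U₁ = {(x,0)}`, `U₂ = {(0,y)}`,
`U₃ = {(x,x)}` and `U₄ = {(x, J_λ x)}`.  Every idempotent `k`-linear endomorphism `S`
of `V` preserving all four subspaces is `0` or the identity; i.e. the corresponding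
representation `R_λ^{(m)}` of the four subspace quiver (with dimension vector
`(2m, m, m, m, m)`) is indecomposable. -/
theorem four_subspace_representation_indecomposable (k : Type*) [Field k]
    (m : ℕ) (hm : 1 ≤ m) (lam : k) (h0 : lam ≠ 0) (h1 : lam ≠ 1)
    (S : ((Fin m → k) × (Fin m → k)) →ₗ[k] ((Fin m → k) × (Fin m → k)))
    (hidem : S ∘ₗ S = S)
    (hU1 : ∀ p : (Fin m → k) × (Fin m → k), p.2 = 0 → (S p).2 = 0)
    (hU2 : ∀ p : (Fin m → k) × (Fin m → k), p.1 = 0 → (S p).1 = 0)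
    (hU3 : ∀ p : (Fin m → k) × (Fin m → k), p.1 = p.2 → (S p).1 = (S p).2)
    (hU4 : ∀ p : (Fin m → k) × (Fin m → k),
      p.2 = (jordanBlock k m lam).mulVec p.1 →
      (S p).2 = (jordanBlock k m lam).mulVec (S p).1) :
    S = 0 ∨ S = LinearMap.id := by
  classical
  set A : (Fin m → k) →ₗ[k] (Fin m → k) :=
    LinearMap.fst k _ _ ∘ₗ S ∘ₗ LinearMap.inl k _ _ with hAdef
  set B : (Fin m → k) →ₗ[k] (Fin m → k) :=
    LinearMap.snd k _ _ ∘ₗ S ∘ₗ LinearMap.inr k _ _ with hBdef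
  have hS1 : ∀ x : Fin m → k, S (x, 0) = (A x, 0) := by
    intro x
    have h2 := hU1 (x, 0) rfl
    exact Prod.ext rfl h2
  have hS2 : ∀ y : Fin m → k, S (0, y) = (0, B y) := by
    intro y
    have h1' := hU2 (0, y) rfl
    exact Prod.ext h1' rfl
  have hS : ∀ x y : Fin m → k, S (x, y) = (A x, B y) := by
    intro x y
    have : (x, y) = ((x, 0) : (Fin m → k) × (Fin m → k)) + (0, y) := by simp
    rw [this, map_add, hS1, hS2]
    simp
  have hBA : ∀ x, B x = A x := by
    intro x
    have := hU3 (x, x) rfl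
    rw [hS] at this
    exact this.symm
  have hAidem : ∀ x, A (A x) = A x := by
    intro x
    have := congrArg (fun T => (T (x, 0)).1) hidem
    simp only [LinearMap.comp_apply] at this
    rw [hS1, hS1] at this
    exact this
  have hcomm : ∀ x, A ((jordanBlock k m lam).mulVec x)
      = (jordanBlock k m lam).mulVec (A x) := by
    intro x
    have := hU4 (x, (jordanBlock k m lam).mulVec x) rfl
    rw [hS] at this
    rw [← hBA ((jordanBlock k m lam).mulVec x)]
    exact this
  have hcommN : ∀ x, A (fsShift k m x) = fsShift k m (A x) := by
    intro x
    have h1' : fsShift k m x = (jordanBlock k m lam).mulVec x - lam • x := by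
      rw [jordan_mulVec]; abel
    have h2' : fsShift k m (A x) = (jordanBlock k m lam).mulVec (A x) - lam • (A x) := by
      rw [jordan_mulVec]; abel
    rw [h1', h2', map_sub, map_smul, hcomm]
  have hcommPow : ∀ (n : ℕ) (x), A ((fsShift k m ^ n) x) = (fsShift k m ^ n) (A x) := by
    intro n
    induction n with
    | zero => intro x; simp
    | succ n ih =>
      intro x
      rw [pow_succ]
      show A ((fsShift k m ^ n) (fsShift k m x)) = _
      rw [ih, hcommN]
      rfl
  -- The key dichotomy on A
  have hdicho : (∀ x, A x = 0) ∨ (∀ x, A x = x) := by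
    by_cases hZ : ∀ x, A x = 0
    · exact Or.inl hZ
    by_cases hI : ∀ x, A x = x
    · exact Or.inr hI
    exfalso
    push_neg at hZ hI
    obtain ⟨y, hy⟩ := hZ
    obtain ⟨v, hv⟩ := hI
    -- w ≠ 0 with A w = w
    set w : Fin m → k := A y with hw
    have hwne : w ≠ 0 := hy
    have hwfix : A w = w := hAidem y
    -- u ≠ 0 with A u = 0
    set u : Fin m → k := A v - v with hu
    have hune : u ≠ 0 := fun hc => hv (by rw [← sub_eq_zero]; exact hc)
    have huker : A u = 0 := by rw [hu, map_sub, hAidem, sub_self]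
    -- find last nonzero iterate of shift on u
    have e0ne : (Pi.single (⟨0, hm⟩ : Fin m) 1 : Fin m → k) ≠ 0 := by
      intro hc
      have := congrFun hc ⟨0, hm⟩
      simp at this
    have key : ∀ z : Fin m → k, z ≠ 0 →
        ∃ c : k, c ≠ 0 ∧ ∃ t : ℕ, (fsShift k m ^ t) z
          = c • (Pi.single (⟨0, hm⟩ : Fin m) 1 : Fin m → k) := by
      intro z hz
      have hex : ∃ n, (fsShift k m ^ n) z = 0 := ⟨m, fsShift_pow_m z⟩
      set j := Nat.find hex with hj
      have hj0 : j ≠ 0 := by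
        intro hc
        have := Nat.find_spec hex
        rw [← hj, hc] at this
        simp at this
        exact hz this
      have hlt : j - 1 < j := by omega
      have hne : (fsShift k m ^ (j - 1)) z ≠ 0 := Nat.find_min hex hlt
      have hker : fsShift k m ((fsShift k m ^ (j - 1)) z) = 0 := by
        have h2 : (fsShift k m ^ j) z = 0 := Nat.find_spec hex
        have h3 : fsShift k m ^ j = fsShift k m * fsShift k m ^ (j - 1) := by
          rw [← pow_succ']
          congr 1
          omega
        rw [h3, Module.End.mul_apply] at h2
        exact h2
      set z' := (fsShift k m ^ (j - 1)) z with hz'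
      have := fsShift_ker hm z' hker
      refine ⟨z' ⟨0, hm⟩, ?_, j - 1, this⟩
      intro hc
      rw [hc, zero_smul] at this
      exact hne this
    obtain ⟨c, hc, t, ht⟩ := key u hune
    obtain ⟨d, hd, s, hs⟩ := key w hwne
    have hAe0 : A (Pi.single (⟨0, hm⟩ : Fin m) 1) = 0 := by
      have h1' : A ((fsShift k m ^ t) u) = 0 := by rw [hcommPow, huker, map_zero]
      rw [ht, map_smul] at h1'
      have h2 : c • A (Pi.single (⟨0, hm⟩ : Fin m) 1 : Fin m → k)
          = c • (0 : Fin m → k) := by rw [smul_zero]; exact h1'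
      exact smul_right_injective _ hc h2
    have hAe1 : A (Pi.single (⟨0, hm⟩ : Fin m) 1) = Pi.single (⟨0, hm⟩ : Fin m) 1 := by
      have h1' : A ((fsShift k m ^ s) w) = (fsShift k m ^ s) w := by
        rw [hcommPow, hwfix]
      rw [hs, map_smul] at h1'
      have := smul_right_injective (Fin m → k) hd h1'
      exact this
    rw [hAe0] at hAe1
    exact e0ne hAe1.symm
  rcases hdicho with hZ | hI
  · left
    apply LinearMap.ext
    intro p
    have := hS p.1 p.2
    rw [hBA, hZ, hZ] at this
    exact this
  · right
    apply LinearMap.ext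
    intro p
    have := hS p.1 p.2
    rw [hBA, hI, hI] at this
    simpa using this
end
end

section
/- Let C be an additive category with the Krull–Remak–Schmidt property (every object is a finite biproduct of objects with local endomorphism rings), D an additive category, and F : C → D an additive functor that is full and essentially surjective. Suppose K is a class of objects of C, closed under isomorphism, finite biproducts and direct summands, such that for every morphism f of C one has F(f) = 0 if and only if f factors through some object of K. Let C_K be the full subcategory of C consisting of the objects having no nonzero direct summand in K. Then the restriction of F to C_K is a detecting functor: it is full, essentially surjective, and reflects isomorphisms (any morphism α in C_K with F(α) an isomorphism is itself an isomorphism). -/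
set_option maxHeartbeats 1600000
set_option synthInstance.maxHeartbeats 400000

open CategoryTheory CategoryTheory.Limits

namespace Statement17

set_option linter.unusedSectionVars false

variable {C : Type*} [Category C] [Preadditive C] [HasBinaryBiproducts C]

lemma isIso_elem_lower {G W : C} (x : W ⟶ G) :
    IsIso (𝟙 (G ⊞ W) + biprod.snd ≫ x ≫ biprod.inl) := by
  refine ⟨𝟙 (G ⊞ W) - biprod.snd ≫ x ≫ biprod.inl, ?_, ?_⟩ <;>
  · simp only [Preadditive.comp_add, Preadditive.comp_sub, Preadditive.add_comp,
      Preadditive.sub_comp, Category.id_comp, Category.comp_id, Category.assoc,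
      biprod.inl_snd_assoc, zero_comp, comp_zero]
    abel

lemma isIso_elem_upper {G W : C} (y : G ⟶ W) :
    IsIso (𝟙 (G ⊞ W) + biprod.fst ≫ y ≫ biprod.inr) := by
  refine ⟨𝟙 (G ⊞ W) - biprod.fst ≫ y ≫ biprod.inr, ?_, ?_⟩ <;>
  · simp only [Preadditive.comp_add, Preadditive.comp_sub, Preadditive.add_comp,
      Preadditive.sub_comp, Category.id_comp, Category.comp_id, Category.assoc,
      biprod.inr_fst_assoc, zero_comp, comp_zero]
    abel

lemma isIso_of_schur {G W : C} (g : G ⊞ W ⟶ G ⊞ W) (a' : G ⟶ G) (t : W ⟶ W)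
    (ha1 : (biprod.inl ≫ g ≫ biprod.fst) ≫ a' = 𝟙 G)
    (ha2 : a' ≫ (biprod.inl ≫ g ≫ biprod.fst) = 𝟙 G)
    (ht1 : (biprod.inr ≫ g ≫ biprod.snd
        - (biprod.inr ≫ g ≫ biprod.fst) ≫ a' ≫ (biprod.inl ≫ g ≫ biprod.snd)) ≫ t = 𝟙 W)
    (ht2 : t ≫ (biprod.inr ≫ g ≫ biprod.snd
        - (biprod.inr ≫ g ≫ biprod.fst) ≫ a' ≫ (biprod.inl ≫ g ≫ biprod.snd)) = 𝟙 W) :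
    IsIso g := by
  set a := biprod.inl ≫ g ≫ biprod.fst with hadef
  set b := biprod.inl ≫ g ≫ biprod.snd with hbdef
  set c := biprod.inr ≫ g ≫ biprod.fst with hcdef
  set d := biprod.inr ≫ g ≫ biprod.snd with hddef
  have hfact : g = (𝟙 (G ⊞ W) + biprod.snd ≫ (c ≫ a') ≫ biprod.inl)
      ≫ biprod.map a (d - c ≫ a' ≫ b)
      ≫ (𝟙 (G ⊞ W) + biprod.fst ≫ (a' ≫ b) ≫ biprod.inr) := by
    apply biprod.hom_ext' <;> apply biprod.hom_ext <;>
      simp only [Preadditive.comp_add, Preadditive.comp_sub, Preadditive.add_comp,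
        Preadditive.sub_comp, Category.id_comp, Category.comp_id, Category.assoc,
        biprod.inl_snd_assoc, biprod.inr_fst_assoc, biprod.inl_fst_assoc, biprod.inr_snd_assoc,
        biprod.inl_map_assoc, biprod.inr_map_assoc, biprod.inl_map, biprod.inr_map,
        biprod.inl_fst, biprod.inl_snd, biprod.inr_fst, biprod.inr_snd,
        zero_comp, comp_zero, add_zero, zero_add]
    · exact hadef.symm
    · rw [← hbdef, ← Category.assoc, ha1, Category.id_comp]
    · rw [← hcdef, ha2]; simp
    · rw [← hddef, reassoc_of% ha1]; abel
  rw [hfact]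
  have h1 := isIso_elem_lower (G := G) (W := W) (c ≫ a')
  have h2 := isIso_elem_upper (G := G) (W := W) (a' ≫ b)
  have h3 : IsIso a := ⟨a', ha1, ha2⟩
  have h4 : IsIso (d - c ≫ a' ≫ b) := ⟨t, ht1, ht2⟩
  have h5 : IsIso (biprod.map a (d - c ≫ a' ≫ b)) :=
    inferInstanceAs (IsIso (biprod.mapIso (asIso a) (asIso (d - c ≫ a' ≫ b))).hom)
  infer_instance

def FullSplit {Z : C} (e : Z ⟶ Z) : Prop :=
  ∃ (A B : C) (sA : A ⟶ Z) (rA : Z ⟶ A) (sB : B ⟶ Z) (rB : Z ⟶ B),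
    sA ≫ rA = 𝟙 A ∧ sB ≫ rB = 𝟙 B ∧ rA ≫ sA = e ∧ rB ≫ sB = 𝟙 Z - e

lemma FullSplit.compl {Z : C} {e : Z ⟶ Z} (h : FullSplit e) : FullSplit (𝟙 Z - e) := by
  obtain ⟨A, B, sA, rA, sB, rB, h1, h2, h3, h4⟩ := h
  exact ⟨B, A, sB, rB, sA, rA, h2, h1, h4, by rw [h3, sub_sub_cancel]⟩

lemma fullSplit_conj {Z W : C} (ψ : Z ≅ W) {e : Z ⟶ Z}
    (h : FullSplit (ψ.inv ≫ e ≫ ψ.hom)) : FullSplit e := by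
  obtain ⟨A, B, sA, rA, sB, rB, h1, h2, h3, h4⟩ := h
  refine ⟨A, B, sA ≫ ψ.inv, ψ.hom ≫ rA, sB ≫ ψ.inv, ψ.hom ≫ rB, ?_, ?_, ?_, ?_⟩
  · simp only [Category.assoc, Iso.inv_hom_id_assoc, h1]
  · simp only [Category.assoc, Iso.inv_hom_id_assoc, h2]
  · simp only [Category.assoc, reassoc_of% h3, Iso.hom_inv_id_assoc, Iso.hom_inv_id,
      Category.comp_id]
  · simp only [Category.assoc, reassoc_of% h4, Preadditive.sub_comp, Preadditive.comp_sub,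
      Category.id_comp, Iso.hom_inv_id_assoc, Iso.hom_inv_id, Category.comp_id]

lemma isUnit_to_inv {G : C} {x : End G} (h : IsUnit x) :
    ∃ y : G ⟶ G, (x : G ⟶ G) ≫ y = 𝟙 G ∧ y ≫ (x : G ⟶ G) = 𝟙 G := by
  obtain ⟨u, hu⟩ := h
  refine ⟨u.inv, ?_, ?_⟩
  · have h1 := u.inv_val
    rw [hu, End.mul_def] at h1
    exact h1
  · have h1 := u.val_inv
    rw [hu, End.mul_def] at h1
    exact h1

lemma step_caseA {G Z₁ : C} (e : G ⊞ Z₁ ⟶ G ⊞ Z₁) (he : e ≫ e = e)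
    (a' : G ⟶ G)
    (ha1 : (biprod.inl ≫ e ≫ biprod.fst) ≫ a' = 𝟙 G)
    (ha2 : a' ≫ (biprod.inl ≫ e ≫ biprod.fst) = 𝟙 G)
    (IH : ∀ e' : Z₁ ⟶ Z₁, e' ≫ e' = e' → FullSplit e') : FullSplit e := by
  have hee : ∀ {T : C} (w : G ⊞ Z₁ ⟶ T), e ≫ e ≫ w = e ≫ w := fun w => by
    rw [← Category.assoc, he]
  set u : G ⟶ G ⊞ Z₁ := a' ≫ biprod.inl ≫ e with hu
  set p : G ⊞ Z₁ ⟶ G := e ≫ biprod.fst with hp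
  have hufst : u ≫ biprod.fst = 𝟙 G := by rw [hu]; simpa using ha2
  have hup : u ≫ p = 𝟙 G := by
    rw [hu, hp]; simp only [Category.assoc, hee]; simpa using ha2
  have hue : u ≫ e = u := by rw [hu]; simp only [Category.assoc, he]
  set k' : Z₁ ⟶ G ⊞ Z₁ := biprod.inr ≫ (𝟙 _ - p ≫ u) with hk'
  have hk'p : k' ≫ p = 0 := by
    have h0 : (𝟙 (G ⊞ Z₁) - p ≫ u) ≫ p = 0 := by
      rw [Preadditive.sub_comp, Category.id_comp, Category.assoc, hup, Category.comp_id, sub_self]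
    rw [hk', Category.assoc, h0, comp_zero]
  have hkfst : k' ≫ biprod.fst = -(biprod.inr ≫ p) := by
    rw [hk']
    simp only [Category.assoc, Preadditive.comp_sub, Preadditive.sub_comp, Category.id_comp,
      hufst, Category.comp_id, biprod.inr_fst]
    abel
  have hksnd : k' ≫ biprod.snd = 𝟙 Z₁ - biprod.inr ≫ p ≫ u ≫ biprod.snd := by
    rw [hk']
    simp only [Category.assoc, Preadditive.comp_sub, Preadditive.sub_comp, Category.id_comp,
      biprod.inr_snd]
  set Φ : G ⊞ Z₁ ⟶ G ⊞ Z₁ := biprod.desc u k' with hΦ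
  have hinlΦ : biprod.inl ≫ Φ = u := by rw [hΦ]; simp
  have hinrΦ : biprod.inr ≫ Φ = k' := by rw [hΦ]; simp
  have hiso : IsIso Φ := by
    apply isIso_of_schur Φ (𝟙 G) (𝟙 Z₁)
    · simp only [hΦ, biprod.inl_desc_assoc, Category.comp_id]; exact hufst
    · simp only [hΦ, biprod.inl_desc_assoc, Category.id_comp]; exact hufst
    · simp only [hΦ, biprod.inl_desc_assoc, biprod.inr_desc_assoc, Category.comp_id,
        Category.id_comp, hkfst, hksnd, Preadditive.neg_comp, Category.assoc]
      abel
    · simp only [hΦ, biprod.inl_desc_assoc, biprod.inr_desc_assoc, Category.comp_id,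
        Category.id_comp, hkfst, hksnd, Preadditive.neg_comp, Category.assoc,
        Preadditive.comp_sub, Preadditive.sub_comp, Preadditive.comp_neg]
      abel
  set e2 : G ⊞ Z₁ ⟶ G ⊞ Z₁ := Φ ≫ e ≫ inv Φ with he2
  have hinle2 : biprod.inl ≫ e2 = biprod.inl := by
    rw [he2, ← Category.assoc, hinlΦ, ← Category.assoc, hue, ← hinlΦ, Category.assoc,
      IsIso.hom_inv_id, Category.comp_id]
  have hΦp : Φ ≫ p = biprod.fst := by
    apply biprod.hom_ext'
    · rw [← Category.assoc, hinlΦ, hup, biprod.inl_fst]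
    · rw [← Category.assoc, hinrΦ, hk'p, biprod.inr_fst]
  have hinvfst : inv Φ ≫ biprod.fst = p := by rw [← hΦp, IsIso.inv_hom_id_assoc]
  have he2fst : e2 ≫ biprod.fst = biprod.fst := by
    rw [he2]
    simp only [Category.assoc, hinvfst]
    rw [hp, hee, ← hp, hΦp]
  have he2e2 : e2 ≫ e2 = e2 := by
    rw [he2]
    simp only [Category.assoc, IsIso.inv_hom_id_assoc, hee]
  set f2 : Z₁ ⟶ Z₁ := biprod.inr ≫ e2 ≫ biprod.snd with hf2
  have hinre2fst : biprod.inr ≫ e2 ≫ biprod.fst = 0 := by rw [he2fst, biprod.inr_fst]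
  have hinle2snd : biprod.inl ≫ e2 ≫ biprod.snd = 0 := by
    rw [← Category.assoc, hinle2, biprod.inl_snd]
  have hinle2fst : biprod.inl ≫ e2 ≫ biprod.fst = 𝟙 G := by
    rw [← Category.assoc, hinle2, biprod.inl_fst]
  have hf2idem : f2 ≫ f2 = f2 := by
    have h5 : biprod.snd ≫ biprod.inr = 𝟙 (G ⊞ Z₁) - biprod.fst ≫ biprod.inl := by
      rw [← biprod.total]; abel
    rw [hf2]
    simp only [Category.assoc]
    rw [reassoc_of% h5]
    simp only [Preadditive.sub_comp, Preadditive.comp_sub, Category.id_comp, Category.assoc]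
    rw [reassoc_of% he2e2, reassoc_of% he2fst]
    simp only [biprod.inr_fst_assoc, zero_comp, comp_zero, sub_zero]
  have hrecon : e2 = biprod.fst ≫ biprod.inl + biprod.snd ≫ f2 ≫ biprod.inr := by
    apply biprod.hom_ext' <;> apply biprod.hom_ext <;>
      simp only [Preadditive.comp_add, Preadditive.add_comp, Category.assoc,
        biprod.inl_fst_assoc, biprod.inl_snd_assoc, biprod.inr_fst_assoc, biprod.inr_snd_assoc,
        biprod.inl_fst, biprod.inl_snd, biprod.inr_fst, biprod.inr_snd,
        zero_comp, comp_zero, add_zero, zero_add, Category.comp_id]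
    · rw [hinle2fst]
    · rw [hinle2snd]
    · rw [hinre2fst]
    · exact hf2.symm
  obtain ⟨A₁, B₁, sA₁, rA₁, sB₁, rB₁, k1, k2, k3, k4⟩ := IH f2 hf2idem
  have main2 : FullSplit e2 := by
    refine ⟨G ⊞ A₁, B₁, biprod.desc biprod.inl (sA₁ ≫ biprod.inr),
      biprod.lift biprod.fst (biprod.snd ≫ rA₁), sB₁ ≫ biprod.inr, biprod.snd ≫ rB₁,
      ?_, ?_, ?_, ?_⟩
    · apply biprod.hom_ext' <;> apply biprod.hom_ext <;>
        simp [reassoc_of% k1, k1]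
    · simp only [Category.assoc, biprod.inr_snd_assoc, k2]
    · rw [biprod.lift_desc, hrecon]
      simp only [Category.assoc, reassoc_of% k3]
    · simp only [Category.assoc]
      rw [reassoc_of% k4, hrecon]
      simp only [Preadditive.comp_sub, Preadditive.sub_comp, Category.id_comp, Category.assoc]
      rw [← biprod.total]
      abel
  exact fullSplit_conj (asIso Φ).symm main2

lemma step_full {G Z₁ : C} (hloc : IsLocalRing (End G)) (e : G ⊞ Z₁ ⟶ G ⊞ Z₁) (he : e ≫ e = e)
    (IH : ∀ e' : Z₁ ⟶ Z₁, e' ≫ e' = e' → FullSplit e') : FullSplit e := by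
  haveI := hloc
  rcases IsLocalRing.isUnit_or_isUnit_of_add_one
      (a := (show End G from biprod.inl ≫ e ≫ biprod.fst))
      (b := 1 - (show End G from biprod.inl ≫ e ≫ biprod.fst)) (by abel) with h | h
  · obtain ⟨y, hy1, hy2⟩ := isUnit_to_inv h
    exact step_caseA e he y hy1 hy2 IH
  · have he' : (𝟙 (G ⊞ Z₁) - e) ≫ (𝟙 (G ⊞ Z₁) - e) = 𝟙 (G ⊞ Z₁) - e := by
      simp only [Preadditive.sub_comp, Preadditive.comp_sub, Category.id_comp,
        Category.comp_id, he]
      abel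
    have hblock : (1 : End G) - (show End G from biprod.inl ≫ e ≫ biprod.fst)
        = (show End G from biprod.inl ≫ (𝟙 (G ⊞ Z₁) - e) ≫ biprod.fst) := by
      show 𝟙 G - _ = _
      simp [Preadditive.comp_sub, Preadditive.sub_comp]
    rw [hblock] at h
    obtain ⟨y, hy1, hy2⟩ := isUnit_to_inv h
    have hs := (step_caseA (𝟙 _ - e) he' y hy1 hy2 IH).compl
    rw [sub_sub_cancel] at hs
    exact hs

section FinB
variable [HasFiniteBiproducts C]

noncomputable def finConsIso {m : ℕ} (f : Fin (m + 1) → C) :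
    (⨁ f) ≅ f 0 ⊞ (⨁ fun j : Fin m => f j.succ) where
  hom := biprod.lift (biproduct.π f 0) (biproduct.lift fun j => biproduct.π f j.succ)
  inv := biprod.desc (biproduct.ι f 0) (biproduct.desc fun j => biproduct.ι f j.succ)
  hom_inv_id := by
    rw [biprod.lift_desc, biproduct.lift_desc, ← biproduct.total, Fin.sum_univ_succ]
  inv_hom_id := by
    apply biprod.hom_ext'
    · apply biprod.hom_ext
      · simp
      · apply biproduct.hom_ext; intro j
        simp [biproduct.ι_π_ne _ (Fin.succ_ne_zero j).symm]
    · apply biprod.hom_ext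
      · apply biproduct.hom_ext'; intro j
        simp [biproduct.ι_π_ne _ (Fin.succ_ne_zero j)]
      · apply biproduct.hom_ext'; intro j
        apply biproduct.hom_ext; intro k
        by_cases hjk : j = k
        · subst hjk; simp
        · simp [biproduct.ι_π_ne _ (fun hc => hjk (Fin.succ_injective _ hc)),
            biproduct.ι_π_ne _ hjk]

lemma isZero_of_iso_empty {m : ℕ} (hm : m = 0) (f : Fin m → C) (Z : C) (h : Z ≅ ⨁ f) :
    IsZero Z := by
  subst hm
  rw [IsZero.iff_id_eq_zero]
  have h0 : 𝟙 (⨁ f) = 0 := by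
    rw [← biproduct.total]; simp
  calc 𝟙 Z = h.hom ≫ 𝟙 (⨁ f) ≫ h.inv := by simp
    _ = 0 := by rw [h0]; simp

lemma fullSplit_of_KRS : ∀ (m : ℕ) (f : Fin m → C), (∀ i, IsLocalRing (End (f i))) →
    ∀ (Z : C), (Z ≅ ⨁ f) → ∀ e : Z ⟶ Z, e ≫ e = e → FullSplit e := by
  intro m
  induction m with
  | zero =>
    intro f _ Z h e _
    have hz : IsZero Z := isZero_of_iso_empty rfl f Z h
    exact ⟨Z, Z, 𝟙 Z, 𝟙 Z, 𝟙 Z, 𝟙 Z, hz.eq_of_src _ _, hz.eq_of_src _ _, hz.eq_of_src _ _,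
      hz.eq_of_src _ _⟩
  | succ m ih =>
    intro f hl Z h e he
    have h2 : Z ≅ f 0 ⊞ (⨁ fun j : Fin m => f j.succ) := h ≪≫ finConsIso f
    apply fullSplit_conj h2
    have hconj : (h2.inv ≫ e ≫ h2.hom) ≫ (h2.inv ≫ e ≫ h2.hom) = h2.inv ≫ e ≫ h2.hom := by
      simp only [Category.assoc, Iso.hom_inv_id_assoc, reassoc_of% he]
    exact step_full (hl 0) _ hconj
      (fun e' he' => ih (fun j => f j.succ) (fun j => hl j.succ) _ (Iso.refl _) e' he')

lemma core {D : Type*} [Category D] [Preadditive D] (F : C ⥤ D) [F.Additive] :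
    ∀ (m : ℕ) (f : Fin m → C), (∀ i, IsLocalRing (End (f i))) →
    (∀ i, F.map (𝟙 (f i)) ≠ 0) → ∀ (X : C), (X ≅ ⨁ f) →
    ∀ n : X ⟶ X, F.map n = 0 → IsIso (𝟙 X + n) := by
  intro m
  induction m with
  | zero =>
    intro f _ _ X h n _
    have hz : IsZero X := isZero_of_iso_empty rfl f X h
    have hid : 𝟙 X + n = 𝟙 X := hz.eq_of_src _ _
    rw [hid]; infer_instance
  | succ m ih =>
    intro f hl hnz X h n hn
    have h2 : X ≅ f 0 ⊞ (⨁ fun j : Fin m => f j.succ) := h ≪≫ finConsIso f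
    set W := ⨁ fun j : Fin m => f j.succ with hW
    set n2 : f 0 ⊞ W ⟶ f 0 ⊞ W := h2.inv ≫ n ≫ h2.hom with hn2def
    have hFn2 : F.map n2 = 0 := by
      rw [hn2def, F.map_comp, F.map_comp, hn, zero_comp, comp_zero]
    set g : f 0 ⊞ W ⟶ f 0 ⊞ W := 𝟙 _ + n2 with hgdef
    suffices hg : IsIso g by
      have hxg : 𝟙 X + n = h2.hom ≫ g ≫ h2.inv := by
        rw [hgdef]
        simp only [Preadditive.comp_add, Preadditive.add_comp, Category.assoc,
          Iso.hom_inv_id, Category.comp_id, hn2def, Iso.hom_inv_id_assoc, Category.id_comp]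
      rw [hxg]; infer_instance
    have hablock : (show End (f 0) from biprod.inl ≫ g ≫ biprod.fst)
        = 1 + (show End (f 0) from biprod.inl ≫ n2 ≫ biprod.fst) := by
      show (biprod.inl ≫ g ≫ biprod.fst : f 0 ⟶ f 0) = 𝟙 (f 0) + _
      rw [hgdef]
      simp [Preadditive.comp_add, Preadditive.add_comp]
    have hFn11 : F.map (biprod.inl ≫ n2 ≫ biprod.fst) = 0 := by
      rw [F.map_comp, F.map_comp, hFn2, zero_comp, comp_zero]
    haveI := hl 0
    have ha : IsUnit (show End (f 0) from biprod.inl ≫ g ≫ biprod.fst) := by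
      rcases IsLocalRing.isUnit_or_isUnit_of_add_one (R := End (f 0))
        (a := show End (f 0) from biprod.inl ≫ g ≫ biprod.fst)
        (b := - (show End (f 0) from biprod.inl ≫ n2 ≫ biprod.fst))
        (by rw [hablock]; abel) with hu | hu
      · exact hu
      · exfalso
        rw [IsUnit.neg_iff] at hu
        obtain ⟨y, hy1, hy2⟩ := isUnit_to_inv hu
        apply hnz 0
        have hid : 𝟙 (f 0) = (biprod.inl ≫ n2 ≫ biprod.fst) ≫ y := hy1.symm
        rw [hid, F.map_comp, hFn11, zero_comp]
    obtain ⟨a', ha1, ha2⟩ := isUnit_to_inv ha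
    set S : W ⟶ W := (biprod.inr ≫ g ≫ biprod.snd)
        - (biprod.inr ≫ g ≫ biprod.fst) ≫ a' ≫ (biprod.inl ≫ g ≫ biprod.snd) with hSdef
    have hSform : S = 𝟙 W + ((biprod.inr ≫ n2 ≫ biprod.snd)
        - (biprod.inr ≫ g ≫ biprod.fst) ≫ a' ≫ (biprod.inl ≫ g ≫ biprod.snd)) := by
      rw [hSdef, hgdef]
      simp only [Preadditive.comp_add, Preadditive.add_comp, Category.assoc,
        Category.comp_id, Category.id_comp, biprod.inr_snd]
      abel
    have hFS0 : F.map ((biprod.inr ≫ n2 ≫ biprod.snd)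
        - (biprod.inr ≫ g ≫ biprod.fst) ≫ a' ≫ (biprod.inl ≫ g ≫ biprod.snd)) = 0 := by
      rw [F.map_sub]
      have e1 : F.map (biprod.inr ≫ n2 ≫ biprod.snd) = 0 := by
        rw [F.map_comp, F.map_comp, hFn2, zero_comp, comp_zero]
      have hgC : biprod.inr ≫ g ≫ biprod.fst = biprod.inr ≫ n2 ≫ biprod.fst := by
        rw [hgdef]
        simp [Preadditive.comp_add, Preadditive.add_comp]
      have e2 : F.map ((biprod.inr ≫ g ≫ biprod.fst) ≫ a' ≫ (biprod.inl ≫ g ≫ biprod.snd))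
          = 0 := by
        rw [hgC, F.map_comp]
        rw [show F.map (biprod.inr ≫ n2 ≫ biprod.fst) = 0 by
          rw [F.map_comp, F.map_comp, hFn2, zero_comp, comp_zero]]
        rw [zero_comp]
      rw [e1, e2, sub_zero]
    have hIH : IsIso S := by
      rw [hSform]
      exact ih (fun j => f j.succ) (fun j => hl j.succ) (fun j => hnz j.succ) W (Iso.refl _)
        _ hFS0
    exact isIso_of_schur g a' (inv S) ha1 ha2 (IsIso.hom_inv_id S) (IsIso.inv_hom_id S)

noncomputable def biproductSubtypeIso {m : ℕ} (f : Fin m → C) (p : Fin m → Prop)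
    [DecidablePred p] :
    (⨁ f) ≅ (⨁ fun j : {i // p i} => f j) ⊞ (⨁ fun j : {i // ¬ p i} => f j) where
  hom := biprod.lift (biproduct.lift fun j => biproduct.π f j)
    (biproduct.lift fun j => biproduct.π f j)
  inv := biprod.desc (biproduct.desc fun j => biproduct.ι f j)
    (biproduct.desc fun j => biproduct.ι f j)
  hom_inv_id := by
    rw [biprod.lift_desc, biproduct.lift_desc, biproduct.lift_desc,
      ← Finset.sum_subtype (Finset.univ.filter p) (fun i => by simp)
        (fun i => biproduct.π f i ≫ biproduct.ι f i),
      ← Finset.sum_subtype (Finset.univ.filter fun i => ¬ p i) (fun i => by simp)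
        (fun i => biproduct.π f i ≫ biproduct.ι f i),
      Finset.sum_filter_add_sum_filter_not, biproduct.total]
  inv_hom_id := by
    apply biprod.hom_ext' <;> apply biprod.hom_ext <;>
      [skip; skip; skip; skip] <;>
      first
      | (apply biproduct.hom_ext'; intro j; apply biproduct.hom_ext; intro k
         by_cases hjk : (j : Fin m) = (k : Fin m)
         · have : j = k := Subtype.ext hjk
           subst this; simp
         · simp [biproduct.ι_π_ne _ hjk,
             biproduct.ι_π_ne _ (fun hc => hjk (congrArg Subtype.val hc))])
      | (apply biproduct.hom_ext'; intro j; apply biproduct.hom_ext; intro k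
         simp [biproduct.ι_π_ne _ (show (j : Fin m) ≠ (k : Fin m) from fun hc => k.2 (hc ▸ j.2))])
      | (apply biproduct.hom_ext'; intro j; apply biproduct.hom_ext; intro k
         simp [biproduct.ι_π_ne _ (show (j : Fin m) ≠ (k : Fin m) from fun hc => j.2 (hc ▸ k.2))])

noncomputable def bUniqueIso {J : Type} [Fintype J] [Unique J] (f : J → C) :
    (⨁ f) ≅ f default where
  hom := biproduct.π f default
  inv := biproduct.ι f default
  hom_inv_id := by
    rw [← biproduct.total, Fintype.sum_unique]
  inv_hom_id := by simp

lemma biprodFin_mem_K (K : Set C)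
    (hK_iso : ∀ ⦃X Y : C⦄, (X ≅ Y) → X ∈ K → Y ∈ K)
    (hK_biprod : ∀ ⦃X Y : C⦄, X ∈ K → Y ∈ K → (X ⊞ Y) ∈ K) :
    ∀ (k : ℕ) (g : Fin (k + 1) → C), (∀ i, g i ∈ K) → (⨁ g) ∈ K := by
  intro k
  induction k with
  | zero =>
    intro g hg
    haveI : Unique (Fin (0 + 1)) := inferInstanceAs (Unique (Fin 1))
    exact hK_iso (bUniqueIso g).symm (hg _)
  | succ k ih =>
    intro g hg
    exact hK_iso (finConsIso g).symm
      (hK_biprod (hg 0) (ih (fun j => g j.succ) (fun j => hg j.succ)))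

lemma mem_K_biproduct (K : Set C)
    (hK_iso : ∀ ⦃X Y : C⦄, (X ≅ Y) → X ∈ K → Y ∈ K)
    (hK_biprod : ∀ ⦃X Y : C⦄, X ∈ K → Y ∈ K → (X ⊞ Y) ∈ K)
    (J : Type) [Fintype J] [Nonempty J] (g : J → C) (hg : ∀ j, g j ∈ K) :
    (⨁ g) ∈ K := by
  have hpos : 0 < Fintype.card J := Fintype.card_pos
  obtain ⟨k, hk⟩ : ∃ k, Fintype.card J = k + 1 := ⟨Fintype.card J - 1, by omega⟩
  let eqv : J ≃ Fin (k + 1) := (Fintype.equivFin J).trans (finCongr hk)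
  have hiso : (⨁ g) ≅ ⨁ (fun j : Fin (k + 1) => g (eqv.symm j)) :=
    biproduct.whiskerEquiv eqv (fun j => eqToIso (by rw [Equiv.symm_apply_apply]))
  exact hK_iso hiso.symm
    (biprodFin_mem_K K hK_iso hK_biprod k (fun j => g (eqv.symm j)) (fun j => hg _))

end FinB

end Statement17

/-- Let `C` be an additive category with the Krull–Remak–Schmidt
property, `D` an additive category, and `F : C → D` an additive functor which is full
and essentially surjective.  Suppose `K` is a class of objects of `C`, closed under
isomorphism, finite biproducts and direct summands, such that `F f = 0` iff `f`
factors through an object of `K`.  Then the restriction of `F` to the full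
subcategory `C_K` of objects with no nonzero direct summand in `K` is a detecting
functor: full, essentially surjective, and isomorphism-reflecting. -/
theorem detecting_restriction_of_full_essSurj
    (C : Type*) [Category C] (D : Type*) [Category D]
    [Preadditive C] [Preadditive D] [HasFiniteBiproducts C]
    [CategoryTheory.Limits.HasBinaryBiproducts C]
    (F : C ⥤ D) [F.Additive] [F.Full] [F.EssSurj]
    (hKRS : ∀ X : C, ∃ (n : ℕ) (f : Fin n → C),
      (∀ i, IsLocalRing (End (f i))) ∧ Nonempty (X ≅ ⨁ f))
    (K : Set C)
    (hK_iso : ∀ ⦃X Y : C⦄, (X ≅ Y) → X ∈ K → Y ∈ K)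
    (hK_biprod : ∀ ⦃X Y : C⦄, X ∈ K → Y ∈ K → (X ⊞ Y) ∈ K)
    (hK_summand : ∀ ⦃X Y : C⦄, (X ⊞ Y) ∈ K → X ∈ K)
    (hker : ∀ ⦃X Y : C⦄ (f : X ⟶ Y),
      F.map f = 0 ↔ ∃ Z : C, Z ∈ K ∧ ∃ (u : X ⟶ Z) (v : Z ⟶ Y), f = u ≫ v) :
    (∀ X Y : C,
      (∀ A B : C, (X ≅ A ⊞ B) → A ∈ K → IsZero A) →
      (∀ A B : C, (Y ≅ A ⊞ B) → A ∈ K → IsZero A) →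
      ∀ g : F.obj X ⟶ F.obj Y, ∃ φ : X ⟶ Y, F.map φ = g) ∧
    (∀ d : D, ∃ X : C,
      (∀ A B : C, (X ≅ A ⊞ B) → A ∈ K → IsZero A) ∧ Nonempty (F.obj X ≅ d)) ∧
    (∀ X Y : C,
      (∀ A B : C, (X ≅ A ⊞ B) → A ∈ K → IsZero A) →
      (∀ A B : C, (Y ≅ A ⊞ B) → A ∈ K → IsZero A) →
      ∀ α : X ⟶ Y, IsIso (F.map α) → IsIso α) := by
  classical
  have hKzero : ∀ Z : C, Z ∈ K → IsZero (F.obj Z) := by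
    intro Z hZ
    rw [IsZero.iff_id_eq_zero, ← F.map_id]
    exact (hker (𝟙 Z)).mpr ⟨Z, hZ, 𝟙 Z, 𝟙 Z, by simp⟩
  have hKrev : ∀ X : C, F.map (𝟙 X) = 0 → X ∈ K := by
    intro X hX
    obtain ⟨Z, hZ, u, v, huv⟩ := (hker (𝟙 X)).mp hX
    have hvu : u ≫ v = 𝟙 X := huv.symm
    have he : (v ≫ u) ≫ (v ≫ u) = v ≫ u := by
      simp only [Category.assoc, reassoc_of% hvu]
    obtain ⟨m, f, hl, ⟨hzi⟩⟩ := hKRS Z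
    obtain ⟨A, B, sA, rA, sB, rB, h1, h2, h3, h4⟩ :=
      Statement17.fullSplit_of_KRS m f hl Z hzi (v ≫ u) he
    have hsAe : sA ≫ (v ≫ u) = sA := by
      rw [← h3, ← Category.assoc, h1, Category.id_comp]
    have hsA1e : sA ≫ (𝟙 Z - v ≫ u) = 0 := by
      rw [Preadditive.comp_sub, Category.comp_id, hsAe, sub_self]
    have hrB : (𝟙 Z - v ≫ u) ≫ rB = rB := by
      rw [← h4, Category.assoc, h2, Category.comp_id]
    have cross1 : sA ≫ rB = 0 := by rw [← hrB, ← Category.assoc, hsA1e, zero_comp]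
    have hsBe : sB ≫ (v ≫ u) = 0 := by
      have h5 : sB ≫ (𝟙 Z - v ≫ u) = sB := by
        rw [← h4, ← Category.assoc, h2, Category.id_comp]
      rw [Preadditive.comp_sub, Category.comp_id] at h5
      exact sub_eq_self.mp h5
    have hrA : (v ≫ u) ≫ rA = rA := by
      rw [← h3, Category.assoc, h1, Category.comp_id]
    have cross2 : sB ≫ rA = 0 := by rw [← hrA, ← Category.assoc, hsBe, zero_comp]
    have hiso : Z ≅ A ⊞ B := by
      refine ⟨biprod.lift rA rB, biprod.desc sA sB, ?_, ?_⟩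
      · rw [biprod.lift_desc, h3, h4]; abel
      · apply biprod.hom_ext' <;> apply biprod.hom_ext <;>
          simp [h1, h2, cross1, cross2]
    have hAK : A ∈ K := hK_summand (hK_iso hiso hZ)
    have hAX : A ≅ X := by
      refine ⟨sA ≫ v, u ≫ rA, ?_, ?_⟩
      · simp only [Category.assoc]
        rw [reassoc_of% hsAe]
        exact h1
      · simp only [Category.assoc]
        rw [reassoc_of% h3, reassoc_of% hvu, hvu]
    exact hK_iso hAX hAK
  have hnotzero : ∀ (G : C), G ∉ K → F.map (𝟙 G) ≠ 0 := fun G hGK h0 => hGK (hKrev G h0)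
  have pack : ∀ (X : C), (∀ A B : C, (X ≅ A ⊞ B) → A ∈ K → IsZero A) →
      ∀ {m : ℕ} (f : Fin m → C), (∀ i, IsLocalRing (End (f i))) → (X ≅ ⨁ f) →
      ∀ i, f i ∉ K := by
    intro X hX m f hl h i hiK
    letI : Unique {j : Fin m // j = i} := ⟨⟨⟨i, rfl⟩⟩, fun x => Subtype.ext x.2⟩
    have hsingle : (⨁ fun j : {j : Fin m // j = i} => f j) ≅ f i :=
      Statement17.bUniqueIso _
    have hxi : X ≅ f i ⊞ (⨁ fun j : {j : Fin m // ¬ j = i} => f j) :=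
      h ≪≫ Statement17.biproductSubtypeIso f (fun j => j = i) ≪≫
        biprod.mapIso hsingle (Iso.refl _)
    have hzero := hX _ _ hxi hiK
    haveI := hl i
    have h1 : (1 : End (f i)) = 0 := (IsZero.iff_id_eq_zero _).mp hzero
    exact one_ne_zero h1
  have refl_pack : ∀ (X : C), (∀ A B : C, (X ≅ A ⊞ B) → A ∈ K → IsZero A) →
      ∀ (n : X ⟶ X), F.map n = 0 → IsIso (𝟙 X + n) := by
    intro X hX n hn
    obtain ⟨m, f, hl, ⟨h⟩⟩ := hKRS X
    have hnz : ∀ i, F.map (𝟙 (f i)) ≠ 0 := fun i => hnotzero _ (pack X hX f hl h i)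
    exact Statement17.core F m f hl hnz X h n hn
  refine ⟨fun X Y _ _ g => F.map_surjective g, ?_, ?_⟩
  · -- essential surjectivity
    intro d
    obtain ⟨X, ⟨hXd⟩⟩ : ∃ X : C, Nonempty (F.obj X ≅ d) :=
      ⟨F.objPreimage d, ⟨F.objObjPreimageIso d⟩⟩
    obtain ⟨m, f, hl, ⟨h⟩⟩ := hKRS X
    set p : Fin m → Prop := fun i => f i ∉ K with hp
    set X' := ⨁ (fun j : {i // p i} => f (j : Fin m)) with hX'
    set XK := ⨁ (fun j : {i // ¬ p i} => f (j : Fin m)) with hXK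
    have hsplit : X ≅ X' ⊞ XK := h ≪≫ Statement17.biproductSubtypeIso f p
    have hCK : ∀ A B : C, (X' ≅ A ⊞ B) → A ∈ K → IsZero A := by
      intro A B hAB hA
      set u : X' ⟶ A := hAB.hom ≫ biprod.fst with hu
      set v : A ⟶ X' := biprod.inl ≫ hAB.inv with hv
      have hvu : v ≫ u = 𝟙 A := by
        rw [hu, hv]
        simp
      have hFe : F.map (u ≫ v) = 0 := (hker _).mpr ⟨A, hA, u, v, rfl⟩
      set eqv := Fintype.equivFin {i // p i} with heqv
      have hX'iso : X' ≅ ⨁ (fun j : Fin (Fintype.card {i // p i}) => f ((eqv.symm j) : Fin m)) :=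
        biproduct.whiskerEquiv eqv (fun j => eqToIso (by rw [Equiv.symm_apply_apply]))
      have hloc' : ∀ jj, IsLocalRing (End (f ((eqv.symm jj) : Fin m))) := fun jj => hl _
      have hnz' : ∀ jj, F.map (𝟙 (f ((eqv.symm jj) : Fin m))) ≠ 0 := fun jj =>
        hnotzero _ (eqv.symm jj).2
      have hFne : F.map (-(u ≫ v)) = 0 := by rw [F.map_neg, hFe, neg_zero]
      have hiso2 := Statement17.core F _ _ hloc' hnz' X' hX'iso _ hFne
      have h1 : 𝟙 X' + -(u ≫ v) = 𝟙 X' - u ≫ v := by abel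
      rw [h1] at hiso2
      have hee : (u ≫ v) ≫ (u ≫ v) = u ≫ v := by
        simp only [Category.assoc, reassoc_of% hvu]
      have hzero : (𝟙 X' - u ≫ v) ≫ (u ≫ v) = 0 := by
        rw [Preadditive.sub_comp, Category.id_comp, hee, sub_self]
      haveI := hiso2
      have he0 : u ≫ v = 0 :=
        (cancel_epi (𝟙 X' - u ≫ v)).mp (by rw [hzero, comp_zero])
      rw [IsZero.iff_id_eq_zero]
      calc 𝟙 A = v ≫ u := hvu.symm
        _ = (v ≫ u) ≫ (v ≫ u) := by rw [hvu]; simp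
        _ = v ≫ (u ≫ v) ≫ u := by simp only [Category.assoc]
        _ = 0 := by rw [he0, zero_comp, comp_zero]
    have hFXK : IsZero (F.obj XK) := by
      by_cases hne : Nonempty {i // ¬ p i}
      · haveI := hne
        have hXKK : XK ∈ K :=
          Statement17.mem_K_biproduct K hK_iso hK_biprod {i // ¬ p i} (fun j => f (j : Fin m))
            (fun j => not_not.mp j.2)
        exact hKzero _ hXKK
      · haveI := not_nonempty_iff.mp hne
        have hzXK : IsZero XK := by
          rw [IsZero.iff_id_eq_zero, ← biproduct.total]
          rw [Finset.univ_eq_empty, Finset.sum_empty]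
        rw [IsZero.iff_id_eq_zero, ← F.map_id]
        rw [(IsZero.iff_id_eq_zero _).mp hzXK, F.map_zero]
    have hFiso : F.obj X' ≅ d := by
      have i1 : F.obj X' ≅ F.obj (X' ⊞ XK) := by
        refine ⟨F.map biprod.inl, F.map biprod.fst, ?_, ?_⟩
        · rw [← F.map_comp, biprod.inl_fst, F.map_id]
        · rw [← F.map_comp]
          have hfi : (biprod.fst : X' ⊞ XK ⟶ _) ≫ biprod.inl
              = 𝟙 _ - biprod.snd ≫ biprod.inr := by
            rw [← biprod.total]; abel
          rw [hfi, F.map_sub, F.map_id, F.map_comp]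
          have h00 : 𝟙 (F.obj XK) = 0 := (IsZero.iff_id_eq_zero _).mp hFXK
          have hz0 : F.map (biprod.snd : X' ⊞ XK ⟶ XK)
              ≫ F.map (biprod.inr : XK ⟶ X' ⊞ XK) = 0 := by
            calc F.map (biprod.snd : X' ⊞ XK ⟶ XK) ≫ F.map (biprod.inr : XK ⟶ X' ⊞ XK)
                = F.map (biprod.snd : X' ⊞ XK ⟶ XK) ≫ 𝟙 (F.obj XK)
                  ≫ F.map (biprod.inr : XK ⟶ X' ⊞ XK) := by rw [Category.id_comp]
              _ = 0 := by rw [h00, zero_comp, comp_zero]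
          rw [hz0, sub_zero]
      exact i1 ≪≫ (F.mapIso hsplit.symm) ≪≫ hXd
    exact ⟨X', hCK, ⟨hFiso⟩⟩
  · -- reflects isomorphisms
    intro X Y hX hY α hα
    obtain ⟨β, hβ⟩ := F.map_surjective (inv (F.map α))
    have hαβ : IsIso (α ≫ β) := by
      have h0 : F.map (α ≫ β - 𝟙 X) = 0 := by
        rw [F.map_sub, F.map_comp, hβ, F.map_id, IsIso.hom_inv_id, sub_self]
      have h2 := refl_pack X hX _ h0
      have h1 : 𝟙 X + (α ≫ β - 𝟙 X) = α ≫ β := by abel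
      rwa [h1] at h2
    have hβα : IsIso (β ≫ α) := by
      have h0 : F.map (β ≫ α - 𝟙 Y) = 0 := by
        rw [F.map_sub, F.map_comp, hβ, F.map_id, IsIso.inv_hom_id, sub_self]
      have h2 := refl_pack Y hY _ h0
      have h1 : 𝟙 Y + (β ≫ α - 𝟙 Y) = β ≫ α := by abel
      rwa [h1] at h2
    haveI := hαβ
    haveI := hβα
    refine ⟨β ≫ inv (α ≫ β), ?_, ?_⟩
    · rw [← Category.assoc, IsIso.hom_inv_id]
    · have hc : ((β ≫ inv (α ≫ β)) ≫ α) ≫ (β ≫ α) = 𝟙 Y ≫ (β ≫ α) := by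
        calc ((β ≫ inv (α ≫ β)) ≫ α) ≫ (β ≫ α)
            = β ≫ inv (α ≫ β) ≫ (α ≫ β) ≫ α := by simp only [Category.assoc]
          _ = β ≫ α := by rw [IsIso.inv_hom_id_assoc]
          _ = 𝟙 Y ≫ (β ≫ α) := by rw [Category.id_comp]
      exact (cancel_mono (β ≫ α)).mp hc
end
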